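/- arXiv:2605.18354 — 9 statements merged into one kernel-verified Lean document; each statement's English description precedes it below -/
import Mathlib

section
/- Let S_1, …, S_m, S_{m+1} be exchangeable real-valued random variables, and let S_{(1)} ≤ ⋯ ≤ S_{(m)} denote the order statistics of the first m of them. Then for every integer k with 1 ≤ k ≤ m, P(S_{m+1} ≤ S_{(k)}) ≥ k/(m+1). -/
open MeasureTheory

/-- The `k`-th order statistic (1-indexed) of the values `f 0, …, f (m-1)`:
the `k`-th smallest value.  Junk value `0` when the index is out of range. -/
noncomputable def orderStatN {m : ℕ} (f : Fin m → ℝ) (k : ℕ) : ℝ :=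
  if h : k - 1 < m then f (Tuple.sort f ⟨k - 1, h⟩) else 0

/-- A finite family of real-valued random variables is exchangeable if its joint
distribution is invariant under every permutation of the indices. -/
def Exchangeable {Ω : Type*} [MeasurableSpace Ω] (P : Measure Ω) {n : ℕ}
    (S : Fin n → Ω → ℝ) : Prop :=
  ∀ σ : Equiv.Perm (Fin n),
    Measure.map (fun ω (i : Fin n) => S (σ i) ω) P =
      Measure.map (fun ω (i : Fin n) => S i ω) P

section Aux

lemma card_filter_val_lt {n : ℕ} (a : ℕ) (ha : a ≤ n) :
    (Finset.univ.filter fun j : Fin n => (j : ℕ) < a).card = a := by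
  rw [← Fintype.card_subtype]
  have e : {j : Fin n // (j : ℕ) < a} ≃ Fin a :=
    { toFun := fun j => ⟨j.1.1, j.2⟩
      invFun := fun i => ⟨⟨i.1, lt_of_lt_of_le i.2 ha⟩, i.2⟩
      left_inv := fun j => rfl
      right_inv := fun i => rfl }
  rw [Fintype.card_congr e, Fintype.card_fin]

/-- count of indices with value `< x j` -/
noncomputable def cnt {n : ℕ} (x : Fin n → ℝ) (j : Fin n) : ℕ :=
  (Finset.univ.filter fun i => x i < x j).card

lemma card_filter_comp {n : ℕ} (p : ℝ → Prop) [DecidablePred p] (x : Fin n → ℝ)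
    (σ : Equiv.Perm (Fin n)) :
    (Finset.univ.filter fun i => p (x (σ i))).card =
      (Finset.univ.filter fun i => p (x i)).card := by
  have h : (Finset.univ.filter fun i => p (x i)) =
      (Finset.univ.filter fun i => p (x (σ i))).image σ := by
    ext i
    simp only [Finset.mem_filter, Finset.mem_univ, true_and, Finset.mem_image]
    constructor
    · intro hi; exact ⟨σ⁻¹ i, by simpa using hi, by simp⟩
    · rintro ⟨a, ha, rfl⟩; exact ha
  rw [h, Finset.card_image_of_injective _ σ.injective]

lemma cnt_comp {n : ℕ} (x : Fin n → ℝ) (σ : Equiv.Perm (Fin n)) (j : Fin n) :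
    cnt (fun i => x (σ i)) j = cnt x (σ j) := by
  unfold cnt
  exact card_filter_comp (fun t => t < x (σ j)) x σ

lemma cnt_mono_le {n : ℕ} {g : Fin n → ℝ} (hg : Monotone g) (i : Fin n) :
    cnt g i ≤ (i : ℕ) := by
  unfold cnt
  calc (Finset.univ.filter fun i' => g i' < g i).card
      ≤ (Finset.univ.filter fun i' : Fin n => (i' : ℕ) < (i : ℕ)).card := by
        apply Finset.card_le_card
        intro a ha
        simp only [Finset.mem_filter, Finset.mem_univ, true_and] at ha ⊢
        by_contra hc
        push_neg at hc
        exact absurd (hg (by exact_mod_cast hc : i ≤ a)) (not_le.mpr ha)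
    _ = (i : ℕ) := card_filter_val_lt _ i.2.le

lemma orderStat_iff {m k : ℕ} (hk1 : 1 ≤ k) (hkm : k ≤ m) (x : Fin m → ℝ) (t : ℝ) :
    t ≤ orderStatN x k ↔
      (Finset.univ.filter fun i => x i < t).card ≤ k - 1 := by
  have h : k - 1 < m := lt_of_lt_of_le (Nat.sub_lt hk1 one_pos) hkm
  set σ := Tuple.sort x with hσ
  have hg : Monotone (x ∘ σ) := Tuple.monotone_sort x
  have hcnt : (Finset.univ.filter fun i => x i < t).card =
      (Finset.univ.filter fun i => x (σ i) < t).card :=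
    (card_filter_comp (fun s => s < t) x σ).symm
  rw [orderStatN, dif_pos h, hcnt]
  constructor
  · intro ht
    calc (Finset.univ.filter fun i => x (σ i) < t).card
        ≤ (Finset.univ.filter fun i : Fin m => (i : ℕ) < k - 1).card := by
          apply Finset.card_le_card
          intro a ha
          simp only [Finset.mem_filter, Finset.mem_univ, true_and] at ha ⊢
          by_contra hc
          push_neg at hc
          have : x (σ ⟨k - 1, h⟩) ≤ x (σ a) := hg (by exact_mod_cast hc)
          linarith
      _ = k - 1 := card_filter_val_lt _ (le_of_lt h)
  · intro hcard
    by_contra ht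
    push_neg at ht
    have hsub : (Finset.univ.filter fun i : Fin m => (i : ℕ) < k) ⊆
        (Finset.univ.filter fun i => x (σ i) < t) := by
      intro a ha
      simp only [Finset.mem_filter, Finset.mem_univ, true_and] at ha ⊢
      have : x (σ a) ≤ x (σ ⟨k - 1, h⟩) := hg (show (a : ℕ) ≤ k - 1 from Nat.le_sub_one_of_lt ha)
      linarith
    have := Finset.card_le_card hsub
    rw [card_filter_val_lt _ hkm] at this
    omega

lemma many_small {n k : ℕ} (hkn : k ≤ n) (x : Fin n → ℝ) :
    k ≤ (Finset.univ.filter fun j => cnt x j ≤ k - 1).card := by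
  set σ := Tuple.sort x with hσ
  have hg : Monotone (x ∘ σ) := Tuple.monotone_sort x
  have hsub : (Finset.univ.filter fun i : Fin n => (i : ℕ) < k).image σ ⊆
      (Finset.univ.filter fun j => cnt x j ≤ k - 1) := by
    intro j hj
    simp only [Finset.mem_image, Finset.mem_filter, Finset.mem_univ, true_and] at hj ⊢
    obtain ⟨a, ha, rfl⟩ := hj
    have h1 : cnt x (σ a) = cnt (fun i => x (σ i)) a := (cnt_comp x σ a).symm
    rw [h1]
    calc cnt (fun i => x (σ i)) a ≤ (a : ℕ) := cnt_mono_le hg a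
      _ ≤ k - 1 := Nat.le_sub_one_of_lt ha
  have := Finset.card_le_card hsub
  rwa [Finset.card_image_of_injective _ σ.injective, card_filter_val_lt _ hkn] at this

lemma cnt_measurable {n : ℕ} (j : Fin n) : Measurable fun x : Fin n → ℝ => cnt x j := by
  have : (fun x : Fin n → ℝ => cnt x j) =
      fun x => ∑ i : Fin n, if x i < x j then 1 else 0 := by
    funext x; rw [cnt, Finset.card_filter]
  rw [this]
  apply Finset.measurable_sum
  intro i _
  exact Measurable.ite (measurableSet_lt (measurable_pi_apply i) (measurable_pi_apply j))
    measurable_const measurable_const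

lemma card_filter_castSucc {m : ℕ} (y : Fin (m + 1) → ℝ) :
    (Finset.univ.filter fun i : Fin (m + 1) => y i < y (Fin.last m)).card =
      (Finset.univ.filter fun i : Fin m => y i.castSucc < y (Fin.last m)).card := by
  have h : (Finset.univ.filter fun i : Fin (m + 1) => y i < y (Fin.last m)) =
      (Finset.univ.filter fun i : Fin m => y i.castSucc < y (Fin.last m)).image Fin.castSucc := by
    ext i
    simp only [Finset.mem_filter, Finset.mem_univ, true_and, Finset.mem_image]
    constructor
    · intro hi
      have hne : i ≠ Fin.last m := by rintro rfl; exact lt_irrefl _ hi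
      obtain ⟨a, rfl⟩ := Fin.exists_castSucc_eq.mpr hne
      exact ⟨a, hi, rfl⟩
    · rintro ⟨a, ha, rfl⟩; exact ha
  rw [h, Finset.card_image_of_injective _ (Fin.castSucc_injective m)]

end Aux

/-- If `S 1, …, S m, S (m+1)` are exchangeable and `S_{(1)} ≤ ⋯ ≤ S_{(m)}` are the order
statistics of the first `m` of them, then for every `1 ≤ k ≤ m`,
`P(S_{m+1} ≤ S_{(k)}) ≥ k / (m+1)`. -/
theorem stmt0 {Ω : Type*} [MeasurableSpace Ω] (P : Measure Ω) [IsProbabilityMeasure P]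
    {m : ℕ} (S : Fin (m + 1) → Ω → ℝ) (hmeas : ∀ i, Measurable (S i))
    (hexch : Exchangeable P S) (k : ℕ) (hk1 : 1 ≤ k) (hkm : k ≤ m) :
    (k : ENNReal) / ((m : ENNReal) + 1) ≤
      P {ω | S (Fin.last m) ω ≤ orderStatN (fun i : Fin m => S i.castSucc ω) k} := by
  classical
  set Svec : Ω → Fin (m + 1) → ℝ := fun ω i => S i ω with hSvec
  have hSvecm : Measurable Svec := measurable_pi_lambda _ fun i => hmeas i
  set B : Fin (m + 1) → Set (Fin (m + 1) → ℝ) := fun j => {x | cnt x j ≤ k - 1} with hB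
  have hBmeas : ∀ j, MeasurableSet (B j) := fun j => (cnt_measurable j) measurableSet_Iic
  set A : Fin (m + 1) → Set Ω := fun j => Svec ⁻¹' B j with hA
  have hAmeas : ∀ j, MeasurableSet (A j) := fun j => hSvecm (hBmeas j)
  -- the target set is A (Fin.last m)
  have htarget : {ω | S (Fin.last m) ω ≤ orderStatN (fun i : Fin m => S i.castSucc ω) k} =
      A (Fin.last m) := by
    ext ω
    simp only [Set.mem_setOf_eq, hA, hB, Set.mem_preimage, cnt]
    rw [orderStat_iff hk1 hkm, card_filter_castSucc (Svec ω)]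
  -- all A j have equal measure
  have hAeq : ∀ j, P (A j) = P (A (Fin.last m)) := by
    intro j
    have hσ := hexch (Equiv.swap j (Fin.last m))
    have hm1 : Measurable fun ω (i : Fin (m + 1)) => S (Equiv.swap j (Fin.last m) i) ω :=
      measurable_pi_lambda _ fun i => hmeas _
    have h1 := congrArg (fun μ => μ (B (Fin.last m))) hσ
    rw [Measure.map_apply hm1 (hBmeas _), Measure.map_apply hSvecm (hBmeas _)] at h1
    have h2 : (fun ω (i : Fin (m + 1)) => S (Equiv.swap j (Fin.last m) i) ω) ⁻¹'
        B (Fin.last m) = A j := by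
      ext ω
      simp only [Set.mem_preimage, hA, hB, Set.mem_setOf_eq]
      have := cnt_comp (Svec ω) (Equiv.swap j (Fin.last m)) (Fin.last m)
      rw [Equiv.swap_apply_right] at this
      rw [show (fun i => S (Equiv.swap j (Fin.last m) i) ω) =
        (fun i => Svec ω (Equiv.swap j (Fin.last m) i)) from rfl, this]
    rw [h2] at h1
    exact h1
  -- sum bound
  have hsum : (k : ENNReal) ≤ ∑ j : Fin (m + 1), P (A j) := by
    have hstep : ∀ ω, (k : ENNReal) ≤ ∑ j : Fin (m + 1),
        (A j).indicator (fun _ => (1 : ENNReal)) ω := by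
      intro ω
      have hcard := many_small (Nat.le_succ_of_le hkm) (Svec ω)
      have : ∑ j : Fin (m + 1), (A j).indicator (fun _ => (1 : ENNReal)) ω =
          ((Finset.univ.filter fun j => cnt (Svec ω) j ≤ k - 1).card : ENNReal) := by
        rw [Finset.card_filter]
        push_cast
        apply Finset.sum_congr rfl
        intro j _
        by_cases hj : cnt (Svec ω) j ≤ k - 1 <;>
          simp [Set.indicator_apply, hA, hB, hj]
      rw [this]
      exact_mod_cast hcard
    calc (k : ENNReal) = ∫⁻ _, (k : ENNReal) ∂P := by simp
      _ ≤ ∫⁻ ω, ∑ j : Fin (m + 1), (A j).indicator (fun _ => (1 : ENNReal)) ω ∂P :=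
          lintegral_mono hstep
      _ = ∑ j : Fin (m + 1), ∫⁻ ω, (A j).indicator (fun _ => (1 : ENNReal)) ω ∂P :=
          lintegral_finset_sum _ (fun j _ => measurable_const.indicator (hAmeas j))
      _ = ∑ j : Fin (m + 1), P (A j) := by
          apply Finset.sum_congr rfl
          intro j _
          exact lintegral_indicator_one (hAmeas j)
  have hsum2 : ∑ j : Fin (m + 1), P (A j) = ((m : ENNReal) + 1) * P (A (Fin.last m)) := by
    rw [Finset.sum_congr rfl fun j _ => hAeq j, Finset.sum_const, Finset.card_univ,
      Fintype.card_fin, nsmul_eq_mul]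
    push_cast
    ring
  rw [htarget]
  rw [ENNReal.div_le_iff_le_mul (Or.inl (by simp)) (Or.inl (by finiteness))]
  rw [mul_comm]
  rw [hsum2] at hsum
  exact hsum
end

section
/- Let α ∈ (0,1) and let S_1, …, S_m, S_{m+1} be exchangeable real-valued random variables. Set k_α = ⌈(m+1)(1−α)⌉ and define the split-conformal quantile q̂ = S_{(k_α)} if k_α ≤ m and q̂ = +∞ if k_α = m+1, where S_{(1)} ≤ ⋯ ≤ S_{(m)} are the order statistics of S_1, …, S_m. Then P(S_{m+1} ≤ q̂) ≥ 1 − α. -/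
open MeasureTheory Finset
open scoped ENNReal

/-- The split-conformal quantile: the `k`-th order statistic if `k ≤ m`, and `+∞`
otherwise (in particular when `k = m + 1`). -/
noncomputable def conformalQuantile {m : ℕ} (f : Fin m → ℝ) (k : ℕ) : EReal :=
  if k ≤ m then ((orderStatN f k : ℝ) : EReal) else ⊤

lemma mono_le_iff {n : ℕ} {g : Fin n → ℝ} (hg : Monotone g) (y : ℝ) (t : Fin n) :
    y ≤ g t ↔ (Finset.univ.filter fun j => g j < y).card ≤ (t : ℕ) := by
  constructor
  · intro h
    have hsub : (Finset.univ.filter fun j => g j < y) ⊆ Finset.Iio t := by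
      intro j hj
      simp only [Finset.mem_filter, Finset.mem_univ, true_and] at hj
      rw [Finset.mem_Iio]
      by_contra hle
      exact absurd (lt_of_lt_of_le hj h) (not_lt.mpr (hg (not_lt.mp hle)))
    calc (Finset.univ.filter fun j => g j < y).card ≤ (Finset.Iio t).card :=
          Finset.card_le_card hsub
      _ = (t : ℕ) := Fin.card_Iio t
  · intro h
    by_contra hy
    push_neg at hy
    have hsub : Finset.Iic t ⊆ (Finset.univ.filter fun j => g j < y) := by
      intro j hj
      rw [Finset.mem_Iic] at hj
      simp only [Finset.mem_filter, Finset.mem_univ, true_and]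
      exact lt_of_le_of_lt (hg hj) hy
    have := Finset.card_le_card hsub
    rw [Fin.card_Iic] at this
    omega

lemma card_filter_perm {n : ℕ} (σ : Equiv.Perm (Fin n)) (p : Fin n → Prop) [DecidablePred p] :
    (Finset.univ.filter fun i => p (σ i)).card = (Finset.univ.filter p).card := by
  rw [← Fintype.card_subtype, ← Fintype.card_subtype]
  exact Fintype.card_congr (σ.subtypeEquiv fun a => Iff.rfl)

lemma le_orderStat_iff {m k : ℕ} (hk1 : 1 ≤ k) (hkm : k ≤ m) (f : Fin m → ℝ) (y : ℝ) :
    y ≤ orderStatN f k ↔ (Finset.univ.filter fun i => f i < y).card ≤ k - 1 := by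
  have h : k - 1 < m := by omega
  rw [orderStatN, dif_pos h]
  have hmono := Tuple.monotone_sort f
  have := mono_le_iff hmono y ⟨k - 1, h⟩
  simp only [Function.comp] at this
  rw [this, card_filter_perm (Tuple.sort f) (fun i => f i < y)]

lemma count_ranks {n k : ℕ} (hk1 : 1 ≤ k) (hkn : k ≤ n) (x : Fin n → ℝ) :
    k ≤ (Finset.univ.filter fun j =>
      (Finset.univ.filter fun i => x i < x j).card ≤ k - 1).card := by
  set τ := Tuple.sort x with hτ
  have hmono := Tuple.monotone_sort x
  have hkey : ∀ t : Fin n, (t : ℕ) ≤ k - 1 →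
      (Finset.univ.filter fun i => x i < x (τ t)).card ≤ k - 1 := by
    intro t ht
    have h1 : (Finset.univ.filter fun i => x i < x (τ t)).card
        = (Finset.univ.filter fun j => x (τ j) < x (τ t)).card :=
      (card_filter_perm τ (fun i => x i < x (τ t))).symm
    have h2 : (Finset.univ.filter fun j => x (τ j) < x (τ t)).card ≤ (t : ℕ) := by
      have := (mono_le_iff hmono (x (τ t)) t).mp (by simp [Function.comp, hτ])
      simpa [Function.comp] using this
    omega
  have hlast : k - 1 < n := by omega
  set T : Finset (Fin n) := Finset.Iic ⟨k - 1, hlast⟩ with hT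
  have hcardT : T.card = k := by
    rw [hT, Fin.card_Iic]; simp; omega
  have hsub : T.image τ ⊆ Finset.univ.filter fun j =>
      (Finset.univ.filter fun i => x i < x j).card ≤ k - 1 := by
    intro j hj
    rw [Finset.mem_image] at hj
    obtain ⟨t, ht, rfl⟩ := hj
    simp only [Finset.mem_filter, Finset.mem_univ, true_and]
    rw [hT, Finset.mem_Iic] at ht
    exact hkey t ht
  calc k = T.card := hcardT.symm
    _ = (T.image τ).card := (Finset.card_image_of_injective T τ.injective).symm
    _ ≤ _ := Finset.card_le_card hsub

lemma measB {n : ℕ} (j : Fin n) (c : ℕ) :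
    MeasurableSet {x : Fin n → ℝ | (Finset.univ.filter fun i => x i < x j).card ≤ c} := by
  have hmeas : Measurable fun x : Fin n → ℝ =>
      (Finset.univ.filter fun i => x i < x j).card := by
    simp_rw [Finset.card_filter]
    apply Finset.measurable_sum
    intro i _
    exact Measurable.ite (measurableSet_lt (measurable_pi_apply i) (measurable_pi_apply j))
      measurable_const measurable_const
  exact hmeas (show MeasurableSet {t : ℕ | t ≤ c} from MeasurableSpace.measurableSet_top)

/-- Split-conformal coverage: for exchangeable `S 1, …, S m, S (m+1)`,
`k_α = ⌈(m+1)(1-α)⌉` and `q̂ = S_{(k_α)}` if `k_α ≤ m`, `q̂ = +∞` if `k_α = m+1`,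
we have `P(S_{m+1} ≤ q̂) ≥ 1 - α`. -/
theorem stmt1 {Ω : Type*} [MeasurableSpace Ω] (P : Measure Ω) [IsProbabilityMeasure P]
    {m : ℕ} (S : Fin (m + 1) → Ω → ℝ) (hmeas : ∀ i, Measurable (S i))
    (hexch : Exchangeable P S) (α : ℝ) (hα : α ∈ Set.Ioo (0 : ℝ) 1)
    (k : ℕ) (hk : k = ⌈((m : ℝ) + 1) * (1 - α)⌉₊) :
    ENNReal.ofReal (1 - α) ≤
      P {ω | (S (Fin.last m) ω : EReal) ≤
          conformalQuantile (fun i : Fin m => S i.castSucc ω) k} := by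
  classical
  obtain ⟨hα0, hα1⟩ := hα
  by_cases hkm : k ≤ m
  swap
  · have hev : {ω | (S (Fin.last m) ω : EReal) ≤
        conformalQuantile (fun i : Fin m => S i.castSucc ω) k} = Set.univ := by
      ext ω
      simp [conformalQuantile, hkm]
    rw [hev, measure_univ]
    exact ENNReal.ofReal_le_one.mpr (by linarith)
  · have hk1 : 1 ≤ k := by
      rw [hk]
      refine Nat.one_le_ceil_iff.mpr ?_
      have : (0:ℝ) < (m:ℝ) + 1 := by positivity
      nlinarith
    set φ : Ω → (Fin (m+1) → ℝ) := fun ω i => S i ω with hφdef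
    have hφ : Measurable φ := measurable_pi_lambda _ hmeas
    set B : Fin (m+1) → Set (Fin (m+1) → ℝ) :=
      fun j => {x | (Finset.univ.filter fun i => x i < x j).card ≤ k - 1} with hBdef
    have hBmeas : ∀ j, MeasurableSet (B j) := fun j => measB j (k - 1)
    have hev : {ω | (S (Fin.last m) ω : EReal) ≤
        conformalQuantile (fun i : Fin m => S i.castSucc ω) k} = φ ⁻¹' B (Fin.last m) := by
      ext ω
      simp only [Set.mem_setOf_eq, conformalQuantile, if_pos hkm, EReal.coe_le_coe_iff,
        Set.mem_preimage, hBdef, hφdef]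
      rw [le_orderStat_iff hk1 hkm]
      have hc : (Finset.univ.filter fun i : Fin (m+1) => S i ω < S (Fin.last m) ω).card
          = (Finset.univ.filter fun i : Fin m => S i.castSucc ω < S (Fin.last m) ω).card := by
        rw [Finset.card_filter, Finset.card_filter, Fin.sum_univ_castSucc]
        simp
      rw [hc]
    rw [hev]
    have hPB : ∀ j, P (φ ⁻¹' B j) = P (φ ⁻¹' B (Fin.last m)) := by
      intro j
      set σ := Equiv.swap j (Fin.last m) with hσ
      have hσlast : σ (Fin.last m) = j := Equiv.swap_apply_right _ _
      have hexσ := hexch σ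
      set ψ : (Fin (m+1) → ℝ) → (Fin (m+1) → ℝ) := fun x i => x (σ i) with hψ
      have hψm : Measurable ψ := measurable_pi_lambda _ fun i => measurable_pi_apply (σ i)
      have hcomp : (fun ω (i : Fin (m+1)) => S (σ i) ω) = ψ ∘ φ := rfl
      have h1 : Measure.map ψ (Measure.map φ P) = Measure.map φ P := by
        rw [Measure.map_map hψm hφ, ← hcomp, hexσ, hφdef]
      have h2 : ψ ⁻¹' B (Fin.last m) = B j := by
        ext x
        simp only [hψ, hBdef, Set.mem_preimage, Set.mem_setOf_eq]
        rw [card_filter_perm σ (fun i => x i < x (σ (Fin.last m))), hσlast]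
      calc P (φ ⁻¹' B j) = (Measure.map φ P) (B j) := (Measure.map_apply hφ (hBmeas j)).symm
        _ = (Measure.map φ P) (ψ ⁻¹' B (Fin.last m)) := by rw [h2]
        _ = (Measure.map ψ (Measure.map φ P)) (B (Fin.last m)) :=
            (Measure.map_apply hψm (hBmeas (Fin.last m))).symm
        _ = (Measure.map φ P) (B (Fin.last m)) := by rw [h1]
        _ = P (φ ⁻¹' B (Fin.last m)) := Measure.map_apply hφ (hBmeas (Fin.last m))
    have hpt : ∀ ω, (k : ℝ≥0∞) ≤
        ∑ j : Fin (m+1), (φ ⁻¹' B j).indicator (fun _ => (1:ℝ≥0∞)) ω := by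
      intro ω
      have hcount := count_ranks hk1 (by omega : k ≤ m + 1) (φ ω)
      calc (k : ℝ≥0∞) ≤ ((Finset.univ.filter fun j : Fin (m+1) =>
            (Finset.univ.filter fun i => φ ω i < φ ω j).card ≤ k - 1).card : ℝ≥0∞) :=
          Nat.cast_le.mpr hcount
        _ = ∑ j : Fin (m+1), (φ ⁻¹' B j).indicator (fun _ => (1:ℝ≥0∞)) ω := by
          rw [Finset.card_filter]
          push_cast
          refine Finset.sum_congr rfl fun j _ => ?_
          rw [Set.indicator_apply]
          simp only [Set.mem_preimage, hBdef, Set.mem_setOf_eq]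
    have hchain : (k : ℝ≥0∞) ≤ ((m : ℝ≥0∞) + 1) * P (φ ⁻¹' B (Fin.last m)) := by
      have hmeasind : ∀ j : Fin (m+1),
          Measurable ((φ ⁻¹' B j).indicator (fun _ => (1:ℝ≥0∞))) :=
        fun j => measurable_const.indicator (hφ (hBmeas j))
      calc (k : ℝ≥0∞) = ∫⁻ _, (k : ℝ≥0∞) ∂P := by simp
        _ ≤ ∫⁻ ω, ∑ j : Fin (m+1), (φ ⁻¹' B j).indicator (fun _ => 1) ω ∂P :=
            lintegral_mono hpt
        _ = ∑ j : Fin (m+1), ∫⁻ ω, (φ ⁻¹' B j).indicator (fun _ => 1) ω ∂P :=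
            lintegral_finset_sum _ fun j _ => hmeasind j
        _ = ∑ j : Fin (m+1), P (φ ⁻¹' B j) := by
            refine Finset.sum_congr rfl fun j _ => ?_
            exact lintegral_indicator_one (hφ (hBmeas j))
        _ = ∑ _j : Fin (m+1), P (φ ⁻¹' B (Fin.last m)) :=
            Finset.sum_congr rfl fun j _ => hPB j
        _ = ((m : ℝ≥0∞) + 1) * P (φ ⁻¹' B (Fin.last m)) := by
            rw [Finset.sum_const, Finset.card_univ, Fintype.card_fin, nsmul_eq_mul]
            push_cast
            ring
    have hM0 : ((m : ℝ≥0∞) + 1) ≠ 0 := by simp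
    have hMt : ((m : ℝ≥0∞) + 1) ≠ ⊤ := by
      simp [ENNReal.add_eq_top]
    have h1 : ((m : ℝ≥0∞) + 1) * ENNReal.ofReal (1 - α) ≤ (k : ℝ≥0∞) := by
      have hle : ((m:ℝ) + 1) * (1 - α) ≤ (k : ℝ) := by
        rw [hk]; exact Nat.le_ceil _
      calc ((m : ℝ≥0∞) + 1) * ENNReal.ofReal (1 - α)
          = ENNReal.ofReal (((m:ℝ) + 1) * (1 - α)) := by
            rw [ENNReal.ofReal_mul (by positivity)]
            congr 1
            rw [ENNReal.ofReal_add (by positivity) zero_le_one]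
            simp [ENNReal.ofReal_natCast]
        _ ≤ ENNReal.ofReal (k : ℝ) := ENNReal.ofReal_le_ofReal hle
        _ = (k : ℝ≥0∞) := ENNReal.ofReal_natCast k
    exact (ENNReal.mul_le_mul_iff_right hM0 hMt).mp (h1.trans hchain)
end

section
/- (Tuning oracle inequality for a finite search class.) Let 𝒜 be a finite set, and for each a ∈ 𝒜 let C_a be a measurable set-valued predictor on 𝒳 with measurable size functional s(C_a(·)) taking values in [0, B]. Let (X_1,Y_1), …, (X_n,Y_n) be i.i.d. from a distribution P on 𝒳 × 𝒴, and define R(a) = P(Y ∉ C_a(X)), S(a) = E[s(C_a(X))], and their empirical versions R̂, Ŝ on the sample. Fix ε_R, ε_S, η > 0 and α ∈ (0,1), suppose n ≥ max{ log(4|𝒜|/η)/(2 ε_R²), B² log(4|𝒜|/η)/(2 ε_S²) }, and suppose {a : R(a) ≤ α − 2ε_R} is nonempty. Let â minimize Ŝ over {a ∈ 𝒜 : R̂(a) ≤ α − ε_R} whenever this set is nonempty. Then with probability at least 1 − η: the feasible set is nonempty, R(â) ≤ α, and S(â) ≤ min{ S(a) : R(a) ≤ α − 2ε_R } + 2ε_S.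 -/
open MeasureTheory

open Real

/-- Hoeffding's lemma, analytic core. -/
lemma hoeff_core {p : ℝ} (hp0 : 0 ≤ p) (hp1 : p ≤ 1) (u : ℝ) :
    -p * u + Real.log (1 - p + p * Real.exp u) ≤ u ^ 2 / 8 := by
  set q : ℝ := 1 - p with hq
  have hq0 : 0 ≤ q := by simp [hq]; linarith
  have hd : ∀ v : ℝ, 0 < q + p * Real.exp v := by
    intro v
    rcases lt_or_eq_of_le hp0 with h | h
    · have := Real.exp_pos v; nlinarith
    · have : q = 1 := by simp [hq, ← h]
      nlinarith [Real.exp_pos v, mul_nonneg hp0 (Real.exp_pos v).le]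
  set φ : ℝ → ℝ := fun v => p * Real.exp v / (q + p * Real.exp v) - p with hφ
  have hdφ : ∀ v, HasDerivAt φ (p * Real.exp v * q / (q + p * Real.exp v) ^ 2) v := by
    intro v
    have h1 : HasDerivAt (fun v => p * Real.exp v) (p * Real.exp v) v :=
      (Real.hasDerivAt_exp v).const_mul p
    have h2 : HasDerivAt (fun v => q + p * Real.exp v) (p * Real.exp v) v :=
      h1.const_add q
    have h3 := (h1.div h2 (hd v).ne')
    have : (p * Real.exp v * (q + p * Real.exp v) - p * Real.exp v * (p * Real.exp v)) /
        (q + p * Real.exp v) ^ 2 = p * Real.exp v * q / (q + p * Real.exp v) ^ 2 := by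
      ring
    rw [this] at h3
    exact h3.sub_const p
  have hφ'le : ∀ v, p * Real.exp v * q / (q + p * Real.exp v) ^ 2 ≤ 1 / 4 := by
    intro v
    rw [div_le_iff₀ (pow_pos (hd v) 2)]
    nlinarith [sq_nonneg (q - p * Real.exp v), mul_nonneg hp0 (Real.exp_pos v).le]
  have hφ'0 : ∀ v, 0 ≤ p * Real.exp v * q / (q + p * Real.exp v) ^ 2 := by
    intro v
    have := Real.exp_pos v
    positivity
  set ψ : ℝ → ℝ := fun v => v / 4 - φ v with hψ
  have hdψ : ∀ v, HasDerivAt ψ (1 / 4 - p * Real.exp v * q / (q + p * Real.exp v) ^ 2) v := by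
    intro v
    exact ((hasDerivAt_id v).div_const 4).sub (hdφ v)
  have hψmono : Monotone ψ := by
    have hdiff : Differentiable ℝ ψ := fun v => (hdψ v).differentiableAt
    apply monotone_of_deriv_nonneg hdiff
    intro v
    rw [(hdψ v).deriv]
    linarith [hφ'le v]
  have hψ0 : ψ 0 = 0 := by
    simp [hψ, hφ, Real.exp_zero, hq]
  -- sign of ψ
  have hψsign : ∀ v, 0 ≤ v → 0 ≤ ψ v := fun v hv => hψ0 ▸ hψmono hv
  have hψsign' : ∀ v, v ≤ 0 → ψ v ≤ 0 := fun v hv => hψ0 ▸ hψmono hv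
  -- now g
  set L : ℝ → ℝ := fun v => -p * v + Real.log (q + p * Real.exp v) with hL
  have hdL : ∀ v, HasDerivAt L (φ v) v := by
    intro v
    have h2 : HasDerivAt (fun v => q + p * Real.exp v) (p * Real.exp v) v :=
      ((Real.hasDerivAt_exp v).const_mul p).const_add q
    have h3 : HasDerivAt (fun v => Real.log (q + p * Real.exp v))
        (p * Real.exp v / (q + p * Real.exp v)) v := h2.log (hd v).ne'
    have h4 := (((hasDerivAt_id v).const_mul (-p)).add h3)
    have : -p * 1 + p * Real.exp v / (q + p * Real.exp v) = φ v := by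
      simp [hφ]; ring
    rw [this] at h4
    exact h4
  set g : ℝ → ℝ := fun v => v ^ 2 / 8 - L v with hg
  have hdg : ∀ v, HasDerivAt g (ψ v) v := by
    intro v
    have h1 : HasDerivAt (fun v : ℝ => v ^ 2 / 8) (v / 4) v := by
      have := ((hasDerivAt_pow 2 v).div_const 8)
      exact this.congr_deriv (by norm_num; ring)
    exact h1.sub (hdL v)
  have hgdiff : Differentiable ℝ g := fun v => (hdg v).differentiableAt
  have hg0 : g 0 = 0 := by simp [hg, hL, hq]
  have hgnonneg : ∀ v, 0 ≤ g v := by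
    intro v
    rcases le_total 0 v with hv | hv
    · have : MonotoneOn g (Set.Ici 0) := by
        apply monotoneOn_of_deriv_nonneg (convex_Ici 0) hgdiff.continuous.continuousOn
          hgdiff.differentiableOn
        intro x hx
        rw [(hdg x).deriv]
        exact hψsign x (le_of_lt (by simpa using hx))
      have := this (Set.self_mem_Ici) hv hv
      linarith [hg0 ▸ this]
    · have : AntitoneOn g (Set.Iic 0) := by
        apply antitoneOn_of_deriv_nonpos (convex_Iic 0) hgdiff.continuous.continuousOn
          hgdiff.differentiableOn
        intro x hx
        rw [(hdg x).deriv]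
        exact hψsign' x (le_of_lt (by simpa using hx))
      have := this hv (Set.self_mem_Iic) hv
      linarith [hg0 ▸ this]
  have := hgnonneg u
  simp only [hg, hL] at this
  have hrw : 1 - p + p * Real.exp u = q + p * Real.exp u := by rw [hq]
  rw [hrw]
  linarith

open MeasureTheory ProbabilityTheory in
lemma mgf_bound {E : Type*} [MeasurableSpace E] (μ : Measure E) [IsProbabilityMeasure μ]
    (f : E → ℝ) (hf : Measurable f) {c : ℝ} (hc : 0 < c) (hfb : ∀ x, f x ∈ Set.Icc 0 c)
    (t : ℝ) :
    ∫ x, Real.exp (t * (f x - ∫ y, f y ∂μ)) ∂μ ≤ Real.exp (t ^ 2 * c ^ 2 / 8) := by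
  set m : ℝ := ∫ y, f y ∂μ with hm
  have hfint : Integrable f μ := by
    apply Integrable.mono' (integrable_const c) hf.aestronglyMeasurable
    filter_upwards with x
    have := hfb x
    rw [Real.norm_eq_abs, abs_le]
    constructor <;> [linarith [this.1]; exact this.2]
  have hm0 : 0 ≤ m := integral_nonneg fun x => (hfb x).1
  have hmc : m ≤ c := by
    calc m ≤ ∫ _, c ∂μ := integral_mono hfint (integrable_const c) fun x => (hfb x).2
    _ = c := by simp
  set p : ℝ := m / c with hp
  have hp0 : 0 ≤ p := div_nonneg hm0 hc.le
  have hp1 : p ≤ 1 := (div_le_one hc).mpr hmc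
  have hpos : 0 < 1 - p + p * Real.exp (t * c) := by
    rcases lt_or_eq_of_le hp0 with h | h
    · nlinarith [Real.exp_pos (t * c)]
    · rw [← h]; norm_num
  have hptw : ∀ x, Real.exp (t * f x) ≤
      (1 - f x / c) + (f x / c) * Real.exp (t * c) := by
    intro x
    have hb0 : 0 ≤ f x / c := div_nonneg (hfb x).1 hc.le
    have hb1 : f x / c ≤ 1 := (div_le_one hc).mpr (hfb x).2
    have := convexOn_exp.2 (Set.mem_univ (0 : ℝ)) (Set.mem_univ (t * c))
      (by linarith : (0:ℝ) ≤ 1 - f x / c) hb0 (by ring)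
    simp only [smul_eq_mul, mul_zero, zero_add, Real.exp_zero, mul_one] at this
    have harg : f x / c * (t * c) = t * f x := by field_simp
    rw [harg] at this
    exact this
  have hintexp : Integrable (fun x => Real.exp (t * f x)) μ := by
    apply Integrable.mono' (integrable_const (Real.exp (|t| * c)))
      ((hf.const_mul t).exp).aestronglyMeasurable
    filter_upwards with x
    rw [Real.norm_eq_abs, abs_of_pos (Real.exp_pos _), Real.exp_le_exp]
    calc t * f x ≤ |t * f x| := le_abs_self _
    _ = |t| * |f x| := abs_mul _ _
    _ ≤ |t| * c := by
        apply mul_le_mul_of_nonneg_left _ (abs_nonneg t)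
        rw [abs_of_nonneg (hfb x).1]; exact (hfb x).2
  have hIle : ∫ x, Real.exp (t * f x) ∂μ ≤ 1 - p + p * Real.exp (t * c) := by
    calc ∫ x, Real.exp (t * f x) ∂μ
        ≤ ∫ x, ((1 - f x / c) + (f x / c) * Real.exp (t * c)) ∂μ := by
          apply integral_mono hintexp _ hptw
          apply Integrable.add
          · exact (integrable_const 1).sub (hfint.div_const c)
          · exact (hfint.div_const c).mul_const _
    _ = 1 - p + p * Real.exp (t * c) := by
        have h1 : Integrable (fun x => 1 - f x / c) μ :=
          (integrable_const 1).sub (hfint.div_const c)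
        have h2 : Integrable (fun x => f x / c * Real.exp (t * c)) μ :=
          (hfint.div_const c).mul_const _
        rw [integral_add h1 h2, integral_sub (integrable_const 1)
          (hfint.div_const c), integral_mul_const, integral_div]
        simp [hp, hm]
  have hsplit : ∀ x, Real.exp (t * (f x - m)) = Real.exp (-t * m) * Real.exp (t * f x) := by
    intro x
    rw [← Real.exp_add]
    ring_nf
  calc ∫ x, Real.exp (t * (f x - m)) ∂μ
      = Real.exp (-t * m) * ∫ x, Real.exp (t * f x) ∂μ := by
        simp_rw [hsplit]
        exact integral_const_mul _ _
  _ ≤ Real.exp (-t * m) * (1 - p + p * Real.exp (t * c)) := by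
        apply mul_le_mul_of_nonneg_left hIle (Real.exp_pos _).le
  _ = Real.exp (-p * (t * c) + Real.log (1 - p + p * Real.exp (t * c))) := by
        rw [Real.exp_add, Real.exp_log hpos]
        congr 2
        rw [hp]; field_simp
  _ ≤ Real.exp ((t * c) ^ 2 / 8) := by
        rw [Real.exp_le_exp]
        exact hoeff_core hp0 hp1 (t * c)
  _ = Real.exp (t ^ 2 * c ^ 2 / 8) := by ring_nf

open MeasureTheory ProbabilityTheory in
lemma hoeff_upper {Ω E : Type*} [MeasurableSpace Ω] [MeasurableSpace E]
    (P : Measure Ω) [IsProbabilityMeasure P] (ν : Measure E) [IsProbabilityMeasure ν]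
    {n : ℕ} (hn : 0 < n) (Z : Fin n → Ω → E) (hZmeas : ∀ i, Measurable (Z i))
    (hindep : iIndepFun Z P)
    (hid : ∀ i, Measure.map (Z i) P = ν)
    (f : E → ℝ) (hf : Measurable f) {c : ℝ} (hc : 0 < c) (hfb : ∀ x, f x ∈ Set.Icc 0 c)
    {ε : ℝ} (hε : 0 < ε) :
    P {ω | (n : ℝ) * (∫ y, f y ∂ν) + n * ε ≤ ∑ i, f (Z i ω)} ≤
      ENNReal.ofReal (Real.exp (-2 * n * ε ^ 2 / c ^ 2)) := by
  set m : ℝ := ∫ y, f y ∂ν with hm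
  have hfint : Integrable f ν := by
    apply Integrable.mono' (integrable_const c) hf.aestronglyMeasurable
    filter_upwards with x
    rw [Real.norm_eq_abs, abs_le]
    exact ⟨by linarith [(hfb x).1], (hfb x).2⟩
  have hm0 : 0 ≤ m := integral_nonneg fun x => (hfb x).1
  have hmc : m ≤ c := by
    calc m ≤ ∫ _, c ∂ν := integral_mono hfint (integrable_const c) fun x => (hfb x).2
    _ = c := by simp
  set X : Fin n → Ω → ℝ := fun i ω => f (Z i ω) - m with hX
  have hXmeas : ∀ i, Measurable (X i) := fun i => (hf.comp (hZmeas i)).sub_const m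
  have hXindep : iIndepFun X P :=
    hindep.comp (fun _ e => f e - m) (fun _ => hf.sub_const m)
  set t : ℝ := 4 * ε / c ^ 2 with ht
  have ht0 : 0 ≤ t := by positivity
  have hXb : ∀ i ω, |X i ω| ≤ c := by
    intro i ω
    rw [abs_le]
    simp only [hX]
    constructor
    · linarith [(hfb (Z i ω)).1, hmc]
    · linarith [(hfb (Z i ω)).2, hm0]
  have hsum_eq : ∀ ω, (∑ i, X i) ω = (∑ i, f (Z i ω)) - n * m := by
    intro ω
    simp only [Finset.sum_apply, hX, Finset.sum_sub_distrib, Finset.sum_const,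
      Finset.card_univ, Fintype.card_fin, nsmul_eq_mul]
  have hset : {ω | (n : ℝ) * m + n * ε ≤ ∑ i, f (Z i ω)} =
      {ω | (n : ℝ) * ε ≤ (∑ i, X i) ω} := by
    ext ω
    simp only [Set.mem_setOf_eq, hsum_eq ω]
    constructor <;> intro h <;> linarith
  -- integrability of exp(t * sum X)
  have hsummeas : Measurable (∑ i, X i) := by
    have : (∑ i, X i) = fun ω => ∑ i, X i ω := by
      ext ω; simp
    rw [this]
    exact Finset.measurable_sum _ fun i _ => hXmeas i
  have hint : Integrable (fun ω => Real.exp (t * (∑ i, X i) ω)) P := by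
    apply Integrable.mono' (integrable_const (Real.exp (t * (n * c))))
      ((hsummeas.const_mul t).exp).aestronglyMeasurable
    filter_upwards with ω
    rw [Real.norm_eq_abs, abs_of_pos (Real.exp_pos _), Real.exp_le_exp]
    apply mul_le_mul_of_nonneg_left _ ht0
    calc (∑ i, X i) ω = ∑ i, X i ω := by simp
    _ ≤ ∑ i, |X i ω| := Finset.sum_le_sum fun i _ => le_abs_self _
    _ ≤ ∑ _i : Fin n, c := Finset.sum_le_sum fun i _ => hXb i ω
    _ = n * c := by simp [mul_comm]
  -- individual mgf bound
  have hmgf : ∀ i, mgf (X i) P t ≤ Real.exp (t ^ 2 * c ^ 2 / 8) := by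
    intro i
    have : mgf (X i) P t = ∫ x, Real.exp (t * (f x - m)) ∂ν := by
      rw [mgf, ← hid i, integral_map (hZmeas i).aemeasurable
        ((((hf.sub_const m).const_mul t).exp).aestronglyMeasurable)]
    rw [this]
    exact mgf_bound ν f hf hc hfb t
  have hmgf0 : ∀ i, 0 ≤ mgf (X i) P t := fun i => mgf_nonneg
  have hchern := measure_ge_le_exp_mul_mgf (μ := P) (X := ∑ i, X i) ((n : ℝ) * ε) ht0 hint
  have hmgfsum : mgf (∑ i, X i) P t ≤ Real.exp ((n : ℝ) * (t ^ 2 * c ^ 2 / 8)) := by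
    have := hXindep.mgf_sum (t := t) hXmeas Finset.univ
    rw [this]
    calc ∏ i : Fin n, mgf (X i) P t ≤ ∏ _i : Fin n, Real.exp (t ^ 2 * c ^ 2 / 8) :=
      Finset.prod_le_prod (fun i _ => hmgf0 i) (fun i _ => hmgf i)
    _ = Real.exp ((n : ℝ) * (t ^ 2 * c ^ 2 / 8)) := by
        rw [Finset.prod_const, ← Real.exp_nat_mul]
        simp
  have hfinal : (P {ω | (n : ℝ) * ε ≤ (∑ i, X i) ω}).toReal ≤
      Real.exp (-2 * n * ε ^ 2 / c ^ 2) := by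
    calc (P {ω | (n : ℝ) * ε ≤ (∑ i, X i) ω}).toReal
        ≤ Real.exp (-t * ((n : ℝ) * ε)) * mgf (∑ i, X i) P t := hchern
    _ ≤ Real.exp (-t * ((n : ℝ) * ε)) * Real.exp ((n : ℝ) * (t ^ 2 * c ^ 2 / 8)) := by
        apply mul_le_mul_of_nonneg_left hmgfsum (Real.exp_pos _).le
    _ = Real.exp (-t * ((n : ℝ) * ε) + (n : ℝ) * (t ^ 2 * c ^ 2 / 8)) := by
        rw [← Real.exp_add]
    _ = Real.exp (-2 * n * ε ^ 2 / c ^ 2) := by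
        congr 1
        rw [ht]
        field_simp
        ring
  rw [hset]
  calc P {ω | (n : ℝ) * ε ≤ (∑ i, X i) ω}
      = ENNReal.ofReal ((P {ω | (n : ℝ) * ε ≤ (∑ i, X i) ω}).toReal) := by
        rw [ENNReal.ofReal_toReal (measure_ne_top _ _)]
  _ ≤ ENNReal.ofReal (Real.exp (-2 * n * ε ^ 2 / c ^ 2)) := ENNReal.ofReal_le_ofReal hfinal

open MeasureTheory ProbabilityTheory in
lemma hoeff_two {Ω E : Type*} [MeasurableSpace Ω] [MeasurableSpace E]
    (P : Measure Ω) [IsProbabilityMeasure P] (ν : Measure E) [IsProbabilityMeasure ν]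
    {n : ℕ} (hn : 0 < n) (Z : Fin n → Ω → E) (hZmeas : ∀ i, Measurable (Z i))
    (hindep : iIndepFun Z P)
    (hid : ∀ i, Measure.map (Z i) P = ν)
    (f : E → ℝ) (hf : Measurable f) {c : ℝ} (hc : 0 < c) (hfb : ∀ x, f x ∈ Set.Icc 0 c)
    {ε : ℝ} (hε : 0 < ε) :
    P {ω | ¬ |(n : ℝ)⁻¹ * ∑ i, f (Z i ω) - ∫ y, f y ∂ν| ≤ ε} ≤
      ENNReal.ofReal (2 * Real.exp (-2 * n * ε ^ 2 / c ^ 2)) := by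
  have hnpos : (0 : ℝ) < n := by exact_mod_cast hn
  set m : ℝ := ∫ y, f y ∂ν with hm
  set g : E → ℝ := fun x => c - f x with hg
  have hgmeas : Measurable g := measurable_const.sub hf
  have hgb : ∀ x, g x ∈ Set.Icc (0:ℝ) c := by
    intro x
    simp only [hg, Set.mem_Icc]
    exact ⟨by linarith [(hfb x).2], by linarith [(hfb x).1]⟩
  have hfint : Integrable f ν := by
    apply Integrable.mono' (integrable_const c) hf.aestronglyMeasurable
    filter_upwards with x
    rw [Real.norm_eq_abs, abs_le]
    exact ⟨by linarith [(hfb x).1], (hfb x).2⟩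
  have hgm : ∫ y, g y ∂ν = c - m := by
    rw [hg]
    rw [integral_sub (integrable_const c) hfint]
    simp [hm]
  have hsub : {ω | ¬ |(n : ℝ)⁻¹ * ∑ i, f (Z i ω) - m| ≤ ε} ⊆
      {ω | (n : ℝ) * m + n * ε ≤ ∑ i, f (Z i ω)} ∪
      {ω | (n : ℝ) * (∫ y, g y ∂ν) + n * ε ≤ ∑ i, g (Z i ω)} := by
    intro ω hω
    simp only [Set.mem_setOf_eq] at hω
    rw [not_le, lt_abs] at hω
    have hsumg : ∑ i, g (Z i ω) = n * c - ∑ i, f (Z i ω) := by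
      simp [hg, Finset.sum_sub_distrib, Finset.card_univ, mul_comm]
    rcases hω with h | h
    · left
      simp only [Set.mem_setOf_eq]
      have h1 : m + ε < (n : ℝ)⁻¹ * ∑ i, f (Z i ω) := by linarith
      have key := mul_lt_mul_of_pos_left h1 hnpos
      have heq : (n : ℝ) * ((n : ℝ)⁻¹ * ∑ i, f (Z i ω)) = ∑ i, f (Z i ω) := by
        field_simp
      linarith
    · right
      simp only [Set.mem_setOf_eq, hgm, hsumg]
      have h1 : (n : ℝ)⁻¹ * ∑ i, f (Z i ω) < m - ε := by linarith
      have key := mul_lt_mul_of_pos_left h1 hnpos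
      have heq : (n : ℝ) * ((n : ℝ)⁻¹ * ∑ i, f (Z i ω)) = ∑ i, f (Z i ω) := by
        field_simp
      nlinarith
  calc P {ω | ¬ |(n : ℝ)⁻¹ * ∑ i, f (Z i ω) - m| ≤ ε}
      ≤ P ({ω | (n : ℝ) * m + n * ε ≤ ∑ i, f (Z i ω)} ∪
        {ω | (n : ℝ) * (∫ y, g y ∂ν) + n * ε ≤ ∑ i, g (Z i ω)}) := measure_mono hsub
  _ ≤ P {ω | (n : ℝ) * m + n * ε ≤ ∑ i, f (Z i ω)} +
      P {ω | (n : ℝ) * (∫ y, g y ∂ν) + n * ε ≤ ∑ i, g (Z i ω)} := measure_union_le _ _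
  _ ≤ ENNReal.ofReal (Real.exp (-2 * n * ε ^ 2 / c ^ 2)) +
      ENNReal.ofReal (Real.exp (-2 * n * ε ^ 2 / c ^ 2)) := by
      gcongr
      · exact hoeff_upper P ν hn Z hZmeas hindep hid f hf hc hfb hε
      · exact hoeff_upper P ν hn Z hZmeas hindep hid g hgmeas hc hgb hε
  _ = ENNReal.ofReal (2 * Real.exp (-2 * n * ε ^ 2 / c ^ 2)) := by
      rw [← ENNReal.ofReal_add (Real.exp_pos _).le (Real.exp_pos _).le]
      congr 1
      ring


/-- Tuning oracle inequality for a finite search class: with an i.i.d. tuning sample of size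
`n ≥ max{log(4|𝒜|/η)/(2ε_R²), B² log(4|𝒜|/η)/(2ε_S²)}` and a nonempty oracle-feasible set
`{a : R(a) ≤ α - 2ε_R}`, if `â` minimizes the empirical size `Ŝ` over the empirically
feasible set `{a : R̂(a) ≤ α - ε_R}` whenever that set is nonempty, then with probability at
least `1 - η` the empirically feasible set is nonempty, `R(â) ≤ α`, and
`S(â) ≤ min{S(a) : R(a) ≤ α - 2ε_R} + 2ε_S`. -/
theorem stmt5 {Ω 𝒳 𝒴 𝒜 : Type*} [MeasurableSpace Ω] [MeasurableSpace 𝒳] [MeasurableSpace 𝒴]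
    [Fintype 𝒜] [Nonempty 𝒜]
    (P : Measure Ω) [IsProbabilityMeasure P]
    (ν : Measure (𝒳 × 𝒴)) [IsProbabilityMeasure ν]
    {n : ℕ} (hn : 0 < n)
    (Z : Fin n → Ω → 𝒳 × 𝒴) (hZmeas : ∀ i, Measurable (Z i))
    (hindep : ProbabilityTheory.iIndepFun Z P)
    (hid : ∀ i, Measure.map (Z i) P = ν)
    (C : 𝒜 → 𝒳 → Set 𝒴) (hC : ∀ a, MeasurableSet {p : 𝒳 × 𝒴 | p.2 ∈ C a p.1})
    (sz : 𝒜 → 𝒳 → ℝ) (hszmeas : ∀ a, Measurable (sz a))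
    (B : ℝ) (hB : 0 < B) (hsz : ∀ a x, sz a x ∈ Set.Icc (0 : ℝ) B)
    -- population miscoverage and size
    (R S : 𝒜 → ℝ)
    (hRdef : ∀ a, R a = (ν {p : 𝒳 × 𝒴 | p.2 ∉ C a p.1}).toReal)
    (hSdef : ∀ a, S a = ∫ p, sz a p.1 ∂ν)
    -- empirical miscoverage and size
    (Rhat Shat : 𝒜 → Ω → ℝ)
    (hRhatdef : ∀ a ω, Rhat a ω = (n : ℝ)⁻¹ * ∑ i : Fin n,
        Set.indicator {p : 𝒳 × 𝒴 | p.2 ∉ C a p.1} (fun _ => (1 : ℝ)) (Z i ω))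
    (hShatdef : ∀ a ω, Shat a ω = (n : ℝ)⁻¹ * ∑ i : Fin n, sz a (Z i ω).1)
    (εR εS η α : ℝ) (hεR : 0 < εR) (hεS : 0 < εS) (hη : 0 < η)
    (hα : α ∈ Set.Ioo (0 : ℝ) 1)
    (hnbig :
      max (Real.log (4 * (Fintype.card 𝒜) / η) / (2 * εR ^ 2))
          (B ^ 2 * Real.log (4 * (Fintype.card 𝒜) / η) / (2 * εS ^ 2)) ≤ (n : ℝ))
    (horacle : ∃ a, R a ≤ α - 2 * εR)
    -- `ahat` minimizes the empirical size over the empirically feasible set whenever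
    -- that set is nonempty
    (ahat : Ω → 𝒜)
    (hahat : ∀ ω, (∃ a, Rhat a ω ≤ α - εR) →
      Rhat (ahat ω) ω ≤ α - εR ∧ ∀ a, Rhat a ω ≤ α - εR → Shat (ahat ω) ω ≤ Shat a ω) :
    ENNReal.ofReal (1 - η) ≤
      P {ω | (∃ a, Rhat a ω ≤ α - εR) ∧ R (ahat ω) ≤ α ∧
          S (ahat ω) ≤ (⨅ a : {a : 𝒜 // R a ≤ α - 2 * εR}, S a.1) + 2 * εS} := by
  classical
  set N : ℕ := Fintype.card 𝒜 with hN
  have hNpos : (0 : ℝ) < N := by exact_mod_cast Fintype.card_pos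
  -- the test functions
  set fR : 𝒜 → 𝒳 × 𝒴 → ℝ :=
    fun a => Set.indicator {p : 𝒳 × 𝒴 | p.2 ∉ C a p.1} (fun _ => (1 : ℝ)) with hfR
  set fS : 𝒜 → 𝒳 × 𝒴 → ℝ := fun a p => sz a p.1 with hfS
  have hsetmeas : ∀ a, MeasurableSet {p : 𝒳 × 𝒴 | p.2 ∉ C a p.1} := fun a => (hC a).compl
  have hfRmeas : ∀ a, Measurable (fR a) :=
    fun a => measurable_const.indicator (hsetmeas a)
  have hfRb : ∀ a p, fR a p ∈ Set.Icc (0 : ℝ) 1 := by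
    intro a p
    by_cases h : p ∈ {p : 𝒳 × 𝒴 | p.2 ∉ C a p.1}
    · simp [hfR, Set.indicator_of_mem h]
    · simp [hfR, Set.indicator_of_notMem h]
  have hfRint : ∀ a, ∫ p, fR a p ∂ν = R a := by
    intro a
    rw [hRdef a, hfR]
    exact integral_indicator_one (hsetmeas a)
  have hfSmeas : ∀ a, Measurable (fS a) := fun a => (hszmeas a).comp measurable_fst
  have hfSb : ∀ a p, fS a p ∈ Set.Icc (0 : ℝ) B := fun a p => hsz a p.1
  have hfSint : ∀ a, ∫ p, fS a p ∂ν = S a := fun a => (hSdef a).symm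
  -- Rhat, Shat as empirical means
  have hRhat_eq : ∀ a ω, Rhat a ω = (n : ℝ)⁻¹ * ∑ i, fR a (Z i ω) := hRhatdef
  have hShat_eq : ∀ a ω, Shat a ω = (n : ℝ)⁻¹ * ∑ i, fS a (Z i ω) := hShatdef
  -- measurability of empirical quantities
  have hRhatmeas : ∀ a, Measurable (fun ω => Rhat a ω) := by
    intro a
    have : (fun ω => Rhat a ω) = fun ω => (n : ℝ)⁻¹ * ∑ i, fR a (Z i ω) :=
      funext fun ω => hRhat_eq a ω
    rw [this]
    exact (Finset.measurable_sum _ fun i _ => (hfRmeas a).comp (hZmeas i)).const_mul _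
  have hShatmeas : ∀ a, Measurable (fun ω => Shat a ω) := by
    intro a
    have : (fun ω => Shat a ω) = fun ω => (n : ℝ)⁻¹ * ∑ i, fS a (Z i ω) :=
      funext fun ω => hShat_eq a ω
    rw [this]
    exact (Finset.measurable_sum _ fun i _ => (hfSmeas a).comp (hZmeas i)).const_mul _
  -- good event
  set G : Set Ω := ⋂ a, ({ω | |Rhat a ω - R a| ≤ εR} ∩ {ω | |Shat a ω - S a| ≤ εS}) with hG
  have hGmeas : MeasurableSet G := by
    apply MeasurableSet.iInter
    intro a
    exact (measurableSet_le ((hRhatmeas a).sub_const (R a)).abs measurable_const).inter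
      (measurableSet_le ((hShatmeas a).sub_const (S a)).abs measurable_const)
  -- tail bounds for each a
  have hlogle : ∀ x : ℝ, Real.log (4 * N / η) ≤ x → Real.exp (-x) ≤ η / (4 * N) := by
    intro x hx
    have h4N : (0 : ℝ) < 4 * N / η := by positivity
    calc Real.exp (-x) ≤ Real.exp (-Real.log (4 * N / η)) := by
          rw [Real.exp_le_exp]; linarith
    _ = (4 * N / η)⁻¹ := by rw [Real.exp_neg, Real.exp_log h4N]
    _ = η / (4 * N) := by rw [inv_div]
  have hbadR : ∀ a, P {ω | ¬ |Rhat a ω - R a| ≤ εR} ≤ ENNReal.ofReal (η / (2 * N)) := by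
    intro a
    have hset : {ω | ¬ |Rhat a ω - R a| ≤ εR} =
        {ω | ¬ |(n : ℝ)⁻¹ * ∑ i, fR a (Z i ω) - ∫ y, fR a y ∂ν| ≤ εR} := by
      ext ω
      rw [Set.mem_setOf_eq, Set.mem_setOf_eq, hRhat_eq a ω, hfRint a]
    rw [hset]
    refine (hoeff_two P ν hn Z hZmeas hindep hid (fR a) (hfRmeas a) one_pos (hfRb a)
      hεR).trans (ENNReal.ofReal_le_ofReal ?_)
    have hexp : Real.exp (-2 * n * εR ^ 2 / 1 ^ 2) ≤ η / (4 * N) := by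
      have hA : Real.log (4 * N / η) / (2 * εR ^ 2) ≤ (n : ℝ) :=
        (le_max_left _ _).trans hnbig
      have : Real.log (4 * N / η) ≤ 2 * n * εR ^ 2 := by
        rw [div_le_iff₀ (by positivity)] at hA
        linarith [hA]
      have := hlogle _ this
      convert this using 2
      ring
    have h2N : η / (2 * N) = 2 * (η / (4 * N)) := by
      field_simp
      ring
    rw [h2N]
    linarith
  have hbadS : ∀ a, P {ω | ¬ |Shat a ω - S a| ≤ εS} ≤ ENNReal.ofReal (η / (2 * N)) := by
    intro a
    have hset : {ω | ¬ |Shat a ω - S a| ≤ εS} =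
        {ω | ¬ |(n : ℝ)⁻¹ * ∑ i, fS a (Z i ω) - ∫ y, fS a y ∂ν| ≤ εS} := by
      ext ω
      rw [Set.mem_setOf_eq, Set.mem_setOf_eq, hShat_eq a ω, hfSint a]
    rw [hset]
    refine (hoeff_two P ν hn Z hZmeas hindep hid (fS a) (hfSmeas a) hB (hfSb a)
      hεS).trans (ENNReal.ofReal_le_ofReal ?_)
    have hexp : Real.exp (-2 * n * εS ^ 2 / B ^ 2) ≤ η / (4 * N) := by
      have hA : B ^ 2 * Real.log (4 * N / η) / (2 * εS ^ 2) ≤ (n : ℝ) :=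
        (le_max_right _ _).trans hnbig
      have hkey : Real.log (4 * N / η) ≤ 2 * n * εS ^ 2 / B ^ 2 := by
        rw [div_le_iff₀ (by positivity)] at hA
        rw [le_div_iff₀ (by positivity)]
        nlinarith [hA]
      have := hlogle _ hkey
      convert this using 2
      ring
    have h2N : η / (2 * N) = 2 * (η / (4 * N)) := by
      field_simp
      ring
    rw [h2N]
    linarith
  -- union bound
  have hGc : P Gᶜ ≤ ENNReal.ofReal η := by
    have hsub : Gᶜ ⊆ ⋃ a, ({ω | ¬ |Rhat a ω - R a| ≤ εR} ∪ {ω | ¬ |Shat a ω - S a| ≤ εS}) := by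
      intro ω hω
      simp only [Set.mem_iUnion, Set.mem_union, Set.mem_setOf_eq]
      by_contra hcon
      push_neg at hcon
      apply hω
      rw [hG]
      exact Set.mem_iInter.mpr fun a => ⟨(hcon a).1, (hcon a).2⟩
    calc P Gᶜ ≤ P (⋃ a, ({ω | ¬ |Rhat a ω - R a| ≤ εR} ∪ {ω | ¬ |Shat a ω - S a| ≤ εS})) :=
        measure_mono hsub
    _ ≤ ∑ a : 𝒜, P ({ω | ¬ |Rhat a ω - R a| ≤ εR} ∪ {ω | ¬ |Shat a ω - S a| ≤ εS}) :=
        measure_iUnion_fintype_le _ _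
    _ ≤ ∑ _a : 𝒜, (ENNReal.ofReal (η / (2 * N)) + ENNReal.ofReal (η / (2 * N))) := by
        apply Finset.sum_le_sum
        intro a _
        exact (measure_union_le _ _).trans (add_le_add (hbadR a) (hbadS a))
    _ = (N : ENNReal) * (ENNReal.ofReal (η / (2 * N)) + ENNReal.ofReal (η / (2 * N))) := by
        rw [Finset.sum_const, Finset.card_univ, nsmul_eq_mul, hN]
    _ = ENNReal.ofReal η := by
        rw [← ENNReal.ofReal_add (by positivity) (by positivity),
          ← ENNReal.ofReal_natCast N, ← ENNReal.ofReal_mul (by positivity)]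
        congr 1
        field_simp
        ring
  -- good event implies the conclusion
  have hne : Nonempty {a : 𝒜 // R a ≤ α - 2 * εR} := by
    obtain ⟨a0, ha0⟩ := horacle
    exact ⟨⟨a0, ha0⟩⟩
  obtain ⟨astar, hastar⟩ :=
    exists_eq_ciInf_of_finite (ι := {a : 𝒜 // R a ≤ α - 2 * εR}) (f := fun a => S a.1)
  have hGsub : G ⊆ {ω | (∃ a, Rhat a ω ≤ α - εR) ∧ R (ahat ω) ≤ α ∧
      S (ahat ω) ≤ (⨅ a : {a : 𝒜 // R a ≤ α - 2 * εR}, S a.1) + 2 * εS} := by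
    intro ω hω
    have hbound : ∀ a, |Rhat a ω - R a| ≤ εR ∧ |Shat a ω - S a| ≤ εS := by
      intro a
      have := Set.mem_iInter.mp hω a
      exact ⟨this.1, this.2⟩
    have hfeas : ∃ a, Rhat a ω ≤ α - εR := by
      refine ⟨astar.1, ?_⟩
      have h1 := (abs_le.mp (hbound astar.1).1).2
      have h2 := astar.2
      linarith
    obtain ⟨hfeas1, hmin⟩ := hahat ω hfeas
    refine ⟨hfeas, ?_, ?_⟩
    · have h1 := (abs_le.mp (hbound (ahat ω)).1).1
      linarith
    · have hRhatstar : Rhat astar.1 ω ≤ α - εR := by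
        have h1 := (abs_le.mp (hbound astar.1).1).2
        have h2 := astar.2
        linarith
      have h3 := hmin astar.1 hRhatstar
      have h4 := (abs_le.mp (hbound (ahat ω)).2).1
      have h5 := (abs_le.mp (hbound astar.1).2).2
      rw [← hastar]
      linarith
  -- conclude
  have hPG : ENNReal.ofReal (1 - η) ≤ P G := by
    have h1 : P G + P Gᶜ = 1 := by
      rw [measure_add_measure_compl hGmeas, measure_univ]
    have h2 : (1 : ENNReal) ≤ P G + ENNReal.ofReal η := by
      rw [← h1]
      exact add_le_add_right hGc _
    have h3 : ENNReal.ofReal (1 - η) = 1 - ENNReal.ofReal η := by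
      rw [ENNReal.ofReal_sub _ hη.le, ENNReal.ofReal_one]
    rw [h3]
    exact tsub_le_iff_right.mpr h2
  exact hPG.trans (measure_mono hGsub)
end

section
/- (Right-tail order-statistic deviation inclusion.) Let S_1, …, S_m be real numbers with order statistics S_{(1)} ≤ ⋯ ≤ S_{(m)}, let F̂_m(q) = (1/m)·#{i : S_i ≤ q} be their empirical distribution function, and let F be a function with values in [0,1]. Let p ∈ [0,1], k = ⌈(m+1)p⌉ with k ≤ m, and q̂ = S_{(k)}. Fix q* ∈ ℝ, t > 0 and c > 0 with F(q* + t) ≥ p + c·t. If q̂ > q* + t, then sup_q |F̂_m(q) − F(q)| > c·t − 2/m. -/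
/-- The empirical distribution function `F̂_m(q) = (1/m) · #{i : S i ≤ q}`. -/
noncomputable def empCDF {m : ℕ} (S : Fin m → ℝ) (q : ℝ) : ℝ :=
  (m : ℝ)⁻¹ * (Finset.univ.filter fun i => S i ≤ q).card

/-- Right-tail order-statistic deviation inclusion: with `k = ⌈(m+1)p⌉ ≤ m`,
`q̂ = S_{(k)}`, and `F(q* + t) ≥ p + c·t`, if `q̂ > q* + t` then
`sup_q |F̂_m(q) − F(q)| > c·t − 2/m`. -/
theorem stmt8 {m : ℕ} (S : Fin m → ℝ)
    (F : ℝ → ℝ) (hF : ∀ q, F q ∈ Set.Icc (0 : ℝ) 1)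
    (p : ℝ) (hp : p ∈ Set.Icc (0 : ℝ) 1)
    (k : ℕ) (hk : k = ⌈((m : ℝ) + 1) * p⌉₊) (hk1 : 1 ≤ k) (hkm : k ≤ m)
    (qstar t c : ℝ) (ht : 0 < t) (hc : 0 < c)
    (hgrow : p + c * t ≤ F (qstar + t))
    (hq : qstar + t < orderStatN S k) :
    c * t - 2 / m < ⨆ q : ℝ, |empCDF S q - F q| := by
  have hm : 0 < m := lt_of_lt_of_le hk1 hkm
  have hmR : (0:ℝ) < m := by exact_mod_cast hm
  set q : ℝ := qstar + t with hqdef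
  have hkm' : k - 1 < m := lt_of_lt_of_le (Nat.pred_lt (Nat.one_le_iff_ne_zero.mp hk1)) hkm
  -- cardinality bound: at most k-1 points are ≤ q
  have hcard : ((Finset.univ.filter fun i => S i ≤ q).card : ℝ) ≤ (k : ℝ) - 1 := by
    have hmono := Tuple.monotone_sort S
    have hcard2 : (Finset.univ.filter fun i => S i ≤ q).card
        = (Finset.univ.filter fun j => S (Tuple.sort S j) ≤ q).card := by
      apply Finset.card_bij (fun i _ => (Tuple.sort S).symm i)
      · intro a ha
        simp only [Finset.mem_filter, Finset.mem_univ, true_and] at ha ⊢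
        simpa using ha
      · intro a _ b _ hab
        exact (Tuple.sort S).symm.injective hab
      · intro b hb
        refine ⟨Tuple.sort S b, ?_, by simp⟩
        simp only [Finset.mem_filter, Finset.mem_univ, true_and] at hb ⊢
        exact hb
    have hsub : (Finset.univ.filter fun j : Fin m => S (Tuple.sort S j) ≤ q)
        ⊆ Finset.univ.filter fun j : Fin m => j < ⟨k - 1, hkm'⟩ := by
      intro j hj
      simp only [Finset.mem_filter, Finset.mem_univ, true_and] at hj ⊢
      by_contra hle
      push_neg at hle
      have h1 : S (Tuple.sort S ⟨k - 1, hkm'⟩) ≤ S (Tuple.sort S j) := hmono hle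
      have h2 := h1.trans hj
      rw [orderStatN, dif_pos hkm'] at hq
      linarith
    have hcard3 : (Finset.univ.filter fun j : Fin m => j < ⟨k - 1, hkm'⟩).card = k - 1 := by
      have : (Finset.univ.filter fun j : Fin m => j < ⟨k - 1, hkm'⟩)
          = Finset.Iio ⟨k - 1, hkm'⟩ := by
        ext j; simp [Finset.mem_Iio]
      rw [this, Fin.card_Iio]
    have hle := (Finset.card_le_card hsub)
    rw [← hcard2, hcard3] at hle
    have : ((Finset.univ.filter fun i => S i ≤ q).card : ℝ) ≤ ((k - 1 : ℕ) : ℝ) := by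
      exact_mod_cast hle
    rwa [Nat.cast_sub hk1, Nat.cast_one] at this
  -- empCDF S q ≤ p + 1/m
  have hkub : (k : ℝ) ≤ ((m : ℝ) + 1) * p + 1 := by
    rw [hk]
    have h0 : (0:ℝ) ≤ ((m : ℝ) + 1) * p := by
      have := hp.1; positivity
    have := Nat.ceil_lt_add_one h0
    linarith
  have hemp : empCDF S q ≤ p + 1 / m := by
    rw [empCDF]
    rw [inv_mul_le_iff₀ hmR]
    have : (k : ℝ) - 1 ≤ ((m : ℝ) + 1) * p := by linarith
    have hple := hp.2
    calc ((Finset.univ.filter fun i => S i ≤ q).card : ℝ) ≤ (k:ℝ) - 1 := hcard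
      _ ≤ ((m : ℝ) + 1) * p := this
      _ = (m:ℝ) * p + p := by ring
      _ ≤ (m:ℝ) * p + 1 := by linarith
      _ = (m:ℝ) * (p + 1/m) := by field_simp
  -- the value at q is large
  have hval : c * t - 2 / m < |empCDF S q - F q| := by
    have h1 : p + c * t ≤ F q := hgrow
    have : c * t - 1 / m ≤ F q - empCDF S q := by linarith
    have habs : F q - empCDF S q ≤ |empCDF S q - F q| := by
      rw [abs_sub_comm]; exact le_abs_self _
    have hfrac : (1:ℝ)/m < 2/m := by
      gcongr
      norm_num
    linarith
  -- bounded above and conclude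
  have hbdd : BddAbove (Set.range fun q : ℝ => |empCDF S q - F q|) := by
    refine ⟨1, ?_⟩
    rintro x ⟨r, rfl⟩
    have h1 : 0 ≤ empCDF S r := by
      rw [empCDF]; positivity
    have h2 : empCDF S r ≤ 1 := by
      rw [empCDF, inv_mul_le_iff₀ hmR, mul_one]
      have h := Finset.card_filter_le Finset.univ (fun i => S i ≤ r)
      simp only [Finset.card_univ, Fintype.card_fin] at h
      exact_mod_cast h
    have h3 := (hF r).1
    have h4 := (hF r).2
    rw [abs_le]; constructor <;> simp <;> linarith
  exact lt_of_lt_of_le hval (le_ciSup hbdd q)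
end

section
/- (Left-tail order-statistic deviation inclusion.) Let S_1, …, S_m be real numbers with order statistics S_{(1)} ≤ ⋯ ≤ S_{(m)}, let F̂_m(q) = (1/m)·#{i : S_i ≤ q} be their empirical distribution function, and let F be a function with values in [0,1]. Let p ∈ [0,1], k = ⌈(m+1)p⌉ with k ≤ m, and q̂ = S_{(k)}. Fix q* ∈ ℝ, t > 0 and c > 0 with F(q* − t) ≤ p − c·t. If q̂ < q* − t, then sup_q |F̂_m(q) − F(q)| ≥ c·t. -/
lemma empCDF_orderStat_ge {m : ℕ} (S : Fin m → ℝ) (k : ℕ) (hk1 : 1 ≤ k) (hkm : k ≤ m) :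
    (k : ℝ) / m ≤ empCDF S (orderStatN S k) := by
  have h : k - 1 < m := lt_of_lt_of_le (Nat.sub_lt hk1 one_pos) hkm
  have hm : 0 < m := lt_of_lt_of_le hk1 hkm
  set q := orderStatN S k with hqdef
  have hq : q = S (Tuple.sort S ⟨k - 1, h⟩) := by
    rw [hqdef, orderStatN, dif_pos h]
  have hsub : (Finset.Iic (⟨k - 1, h⟩ : Fin m)).image (Tuple.sort S) ⊆
      Finset.univ.filter fun i => S i ≤ q := by
    intro i hi
    simp only [Finset.mem_image, Finset.mem_Iic] at hi
    obtain ⟨j, hj, rfl⟩ := hi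
    simp only [Finset.mem_filter, Finset.mem_univ, true_and]
    rw [hq]
    exact Tuple.monotone_sort S hj
  have hcard : k ≤ (Finset.univ.filter fun i => S i ≤ q).card := by
    have := Finset.card_le_card hsub
    rwa [Finset.card_image_of_injective _ (Tuple.sort S).injective, Fin.card_Iic,
      Nat.sub_add_cancel hk1] at this
  rw [empCDF]
  rw [div_eq_inv_mul]
  gcongr


/-- Left-tail order-statistic deviation inclusion: with `k = ⌈(m+1)p⌉ ≤ m`,
`q̂ = S_{(k)}`, and `F(q* − t) ≤ p − c·t`, if `q̂ < q* − t` then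
`sup_q |F̂_m(q) − F(q)| ≥ c·t`. -/
theorem stmt9 {m : ℕ} (S : Fin m → ℝ)
    (F : ℝ → ℝ) (hF : ∀ q, F q ∈ Set.Icc (0 : ℝ) 1)
    (p : ℝ) (hp : p ∈ Set.Icc (0 : ℝ) 1)
    (k : ℕ) (hk : k = ⌈((m : ℝ) + 1) * p⌉₊) (hk1 : 1 ≤ k) (hkm : k ≤ m)
    (qstar t c : ℝ) (ht : 0 < t) (hc : 0 < c)
    (hgrow : F (qstar - t) ≤ p - c * t)
    (hq : orderStatN S k < qstar - t) :
    c * t ≤ ⨆ q : ℝ, |empCDF S q - F q| := by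
  have hm : 0 < m := lt_of_lt_of_le hk1 hkm
  have hm' : (0:ℝ) < m := by exact_mod_cast hm
  -- empCDF bounds
  have hemp_nonneg : ∀ q, (0:ℝ) ≤ empCDF S q := fun q => by
    rw [empCDF]; positivity
  have hemp_le_one : ∀ q, empCDF S q ≤ 1 := fun q => by
    rw [empCDF]
    rw [inv_mul_le_iff₀ hm', mul_one]
    exact_mod_cast (Finset.card_filter_le _ _).trans (by simp)
  have hbdd : BddAbove (Set.range fun q : ℝ => |empCDF S q - F q|) := by
    refine ⟨2, ?_⟩
    rintro x ⟨q, rfl⟩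
    have h1 := hF q
    simp only [Set.mem_Icc] at h1
    have := abs_sub_abs_le_abs_sub (empCDF S q) (F q)
    calc |empCDF S q - F q| ≤ |empCDF S q| + |F q| := abs_sub _ _
      _ ≤ 1 + 1 := by
          gcongr
          · rw [abs_of_nonneg (hemp_nonneg q)]; exact hemp_le_one q
          · rw [abs_of_nonneg h1.1]; exact h1.2
      _ = 2 := by norm_num
  have hkp : p ≤ (k : ℝ) / m := by
    have : ((m:ℝ) + 1) * p ≤ k := by
      rw [hk]
      exact Nat.le_ceil _
    rw [le_div_iff₀ hm']
    nlinarith [hp.1]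
  have hmono : empCDF S (orderStatN S k) ≤ empCDF S (qstar - t) := by
    rw [empCDF, empCDF]
    have : ((Finset.univ.filter fun i => S i ≤ orderStatN S k).card : ℝ) ≤
        (Finset.univ.filter fun i => S i ≤ qstar - t).card := by
      exact_mod_cast Finset.card_le_card (Finset.monotone_filter_right _
        (fun i _ hi => le_trans hi hq.le))
    exact mul_le_mul_of_nonneg_left this (by positivity)
  have key : c * t ≤ |empCDF S (qstar - t) - F (qstar - t)| := by
    have h1 : p ≤ empCDF S (qstar - t) :=
      le_trans hkp (le_trans (empCDF_orderStat_ge S k hk1 hkm) hmono)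
    have : c * t ≤ empCDF S (qstar - t) - F (qstar - t) := by linarith
    exact this.trans (le_abs_self _)
  exact key.trans (le_ciSup hbdd (qstar - t))
end

section
/- (Calibration quantile accuracy.) Let S_1, …, S_m be i.i.d. real-valued random variables with common cumulative distribution function F, let α ∈ (0,1), p = 1 − α, and q* = inf{q : F(q) ≥ p}. Let k = ⌈(m+1)p⌉, assume k ≤ m, and set q̂ = S_{(k)}, the k-th order statistic. Fix t > 0 and c > 0 and assume F(q* + t) ≥ p + c·t and F(q* − t) ≤ p − c·t. Then P(|q̂ − q*| > t) ≤ 2·exp(−2m·((c·t − 2/m)₊)²), where (u)₊ = max{u, 0}. -/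
open MeasureTheory

open Real ProbabilityTheory

section Aux

lemma hoeff_core_s10 (q : ℝ) (hq0 : 0 ≤ q) (hq1 : q ≤ 1) :
    ∀ l : ℝ, 0 ≤ l → 1 - q + q * Real.exp l ≤ Real.exp (q * l + l ^ 2 / 8) := by
  -- D x = 1 - q + q * exp x > 0
  have hD : ∀ x : ℝ, 0 < 1 - q + q * Real.exp x := by
    intro x
    rcases eq_or_lt_of_le hq0 with h | h
    · simp [← h]
    · have := mul_pos h (exp_pos x)
      nlinarith [sub_nonneg.2 hq1]
  set ψ : ℝ → ℝ := fun x => q + x / 4 - q * Real.exp x / (1 - q + q * Real.exp x) with hψdef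
  have hψderiv : ∀ x : ℝ, HasDerivAt ψ
      (1 / 4 - (q * Real.exp x / (1 - q + q * Real.exp x)) *
        (1 - q * Real.exp x / (1 - q + q * Real.exp x))) x := by
    intro x
    have hDx := hD x
    have hDe : HasDerivAt (fun x : ℝ => 1 - q + q * Real.exp x) (q * Real.exp x) x :=
      ((Real.hasDerivAt_exp x).const_mul q).const_add (1 - q)
    have hnum : HasDerivAt (fun x : ℝ => q * Real.exp x) (q * Real.exp x) x :=
      (Real.hasDerivAt_exp x).const_mul q
    have hquot := hnum.div hDe hDx.ne'
    have hx4 : HasDerivAt (fun x : ℝ => q + x / 4) (1 / 4) x := by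
      simpa using ((hasDerivAt_id x).div_const 4).const_add q
    have := hx4.sub hquot
    refine this.congr_deriv ?_
    field_simp
  have hψmono : Monotone ψ := by
    apply monotone_of_deriv_nonneg (fun x => (hψderiv x).differentiableAt)
    intro x
    rw [(hψderiv x).deriv]
    nlinarith [sq_nonneg (q * Real.exp x / (1 - q + q * Real.exp x) - 1 / 2)]
  have hψ0 : ψ 0 = 0 := by simp [hψdef]
  set φ : ℝ → ℝ := fun x => q * x + x ^ 2 / 8 - Real.log (1 - q + q * Real.exp x) with hφdef
  have hφderiv : ∀ x : ℝ, HasDerivAt φ (ψ x) x := by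
    intro x
    have hDe : HasDerivAt (fun x : ℝ => 1 - q + q * Real.exp x) (q * Real.exp x) x :=
      ((Real.hasDerivAt_exp x).const_mul q).const_add (1 - q)
    have hlog := hDe.log (hD x).ne'
    have h1 : HasDerivAt (fun x : ℝ => q * x + x ^ 2 / 8) (q + 2 * x / 8) x := by
      have := ((hasDerivAt_pow 2 x).div_const 8).const_add 0
      have h2 : HasDerivAt (fun x : ℝ => q * x) q x := by
        simpa using (hasDerivAt_id x).const_mul q
      exact (h2.add ((hasDerivAt_pow 2 x).div_const 8)).congr_deriv (by norm_num)
    have := h1.sub hlog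
    refine this.congr_deriv ?_
    simp [hψdef]
    ring
  have hφmono : MonotoneOn φ (Set.Ici 0) := by
    apply monotoneOn_of_deriv_nonneg (convex_Ici 0)
    · exact fun x _ => ((hφderiv x).differentiableAt).continuousAt.continuousWithinAt
    · exact fun x _ => ((hφderiv x).differentiableAt).differentiableWithinAt
    · intro x hx
      rw [(hφderiv x).deriv]
      have : (0:ℝ) ≤ x := le_of_lt (by simpa using hx)
      calc (0:ℝ) = ψ 0 := hψ0.symm
        _ ≤ ψ x := hψmono this
  intro l hl
  have h0 : φ 0 = 0 := by simp [hφdef]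
  have := hφmono (Set.mem_Ici.2 le_rfl) (Set.mem_Ici.2 hl) hl
  rw [h0] at this
  have hlog : Real.log (1 - q + q * Real.exp l) ≤ q * l + l ^ 2 / 8 := by
    simpa [hφdef] using this
  calc 1 - q + q * Real.exp l = Real.exp (Real.log (1 - q + q * Real.exp l)) :=
        (Real.exp_log (hD l)).symm
    _ ≤ Real.exp (q * l + l ^ 2 / 8) := Real.exp_le_exp.2 hlog

lemma hoeff_bernoulli (q : ℝ) (hq0 : 0 ≤ q) (hq1 : q ≤ 1) (l : ℝ) :
    1 - q + q * Real.exp l ≤ Real.exp (q * l + l ^ 2 / 8) := by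
  rcases le_or_gt 0 l with hl | hl
  · exact hoeff_core_s10 q hq0 hq1 l hl
  · have h := hoeff_core_s10 (1 - q) (by linarith) (by linarith) (-l) (by linarith)
    have hexp : Real.exp (-l) * Real.exp l = 1 := by
      rw [← Real.exp_add]; simp
    have := mul_le_mul_of_nonneg_right h (Real.exp_pos l).le
    calc 1 - q + q * Real.exp l
        = (1 - (1 - q) + (1 - q) * Real.exp (-l)) * Real.exp l := by
          have : (1 - q) * Real.exp (-l) * Real.exp l = 1 - q := by
            rw [mul_assoc, hexp]; ring
          nlinarith [this]
      _ ≤ Real.exp ((1 - q) * (-l) + (-l) ^ 2 / 8) * Real.exp l := this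
      _ = Real.exp (q * l + l ^ 2 / 8) := by
          rw [← Real.exp_add]; ring_nf


variable {Ω : Type*} [MeasurableSpace Ω] {P : Measure Ω} [IsProbabilityMeasure P]

lemma integrable_exp_indicator {X : Ω → ℝ} (hX : Measurable X)
    (hr : ∀ ω, X ω = 0 ∨ X ω = 1) (l : ℝ) :
    Integrable (fun ω => Real.exp (l * X ω)) P := by
  refine (integrable_const (max 1 (Real.exp l))).mono' ((hX.const_mul l).exp).aestronglyMeasurable
    (Filter.Eventually.of_forall fun ω => ?_)
  rcases hr ω with h | h <;> simp [h, abs_of_pos (Real.exp_pos _), le_max_left, le_max_right,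
    Real.exp_nonneg]

lemma mgf_indicator_le {X : Ω → ℝ} (hX : Measurable X)
    (hr : ∀ ω, X ω = 0 ∨ X ω = 1) (l : ℝ) :
    mgf X P l ≤ Real.exp ((∫ ω, X ω ∂P) * l + l ^ 2 / 8) := by
  classical
  set A : Set Ω := X ⁻¹' {1} with hA
  have hAm : MeasurableSet A := hX (measurableSet_singleton 1)
  have hXind : ∀ ω, X ω = A.indicator (fun _ => (1:ℝ)) ω := by
    intro ω
    rcases hr ω with h | h
    · have : ω ∉ A := by simp [hA, h]
      simp [this, h]
    · have : ω ∈ A := by simp [hA, h]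
      simp [this, h]
  have hmean : (∫ ω, X ω ∂P) = (P A).toReal := by
    rw [show (fun ω => X ω) = A.indicator (fun _ => (1:ℝ)) from funext hXind]
    simpa [measureReal_def] using integral_indicator_const (1:ℝ) hAm
  set q : ℝ := (P A).toReal with hq
  have hq0 : 0 ≤ q := ENNReal.toReal_nonneg
  have hq1 : q ≤ 1 := by
    rw [hq]
    exact ENNReal.toReal_le_of_le_ofReal one_pos.le (by simpa using prob_le_one)
  have hmgf : mgf X P l = 1 - q + q * Real.exp l := by
    have hptw : ∀ ω, Real.exp (l * X ω)
        = A.indicator (fun _ => Real.exp l - 1) ω + 1 := by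
      intro ω
      rcases hr ω with h | h
      · have : ω ∉ A := by simp [hA, h]
        simp [this, h]
      · have : ω ∈ A := by simp [hA, h]
        simp [this, h]
    rw [mgf]
    rw [show (fun ω => Real.exp (l * X ω))
        = fun ω => A.indicator (fun _ => Real.exp l - 1) ω + 1 from funext hptw]
    rw [integral_add ((integrable_const _).indicator hAm) (integrable_const 1)]
    rw [integral_indicator_const _ hAm]
    simp [hq, measureReal_def]
    ring
  rw [hmgf, hmean]
  exact hoeff_bernoulli q hq0 hq1 l


variable {Ω : Type*} [MeasurableSpace Ω] {P : Measure Ω} [IsProbabilityMeasure P] {m : ℕ}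

lemma chernoff_aux (X : Fin m → Ω → ℝ) (hXm : ∀ i, Measurable (X i))
    (hind : iIndepFun X P)
    (hr : ∀ i ω, X i ω = 0 ∨ X i ω = 1) (l : ℝ) :
    mgf (∑ i, X i) P l ≤ Real.exp ((∑ i, ∫ ω, X i ω ∂P) * l + m * (l ^ 2 / 8)) := by
  rw [hind.mgf_sum hXm Finset.univ]
  calc (∏ i, mgf (X i) P l) ≤ ∏ i, Real.exp ((∫ ω, X i ω ∂P) * l + l ^ 2 / 8) :=
        Finset.prod_le_prod (fun i _ => mgf_nonneg)
          (fun i _ => mgf_indicator_le (hXm i) (hr i) l)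
    _ = Real.exp (∑ i, ((∫ ω, X i ω ∂P) * l + l ^ 2 / 8)) := by rw [Real.exp_sum]
    _ = Real.exp ((∑ i, ∫ ω, X i ω ∂P) * l + m * (l ^ 2 / 8)) := by
        rw [Finset.sum_add_distrib, Finset.sum_mul]
        simp [Finset.sum_const, nsmul_eq_mul]

lemma tail_upper (X : Fin m → Ω → ℝ) (hXm : ∀ i, Measurable (X i))
    (hind : iIndepFun X P)
    (hr : ∀ i ω, X i ω = 0 ∨ X i ω = 1) {a ε : ℝ} (ha : 0 < a)
    (hε : (∑ i, ∫ ω, X i ω ∂P) + m * a ≤ ε) :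
    (P {ω | ε ≤ ∑ i, X i ω}).toReal ≤ Real.exp (-2 * m * a ^ 2) := by
  set M : ℝ := ∑ i, ∫ ω, X i ω ∂P with hM
  have hset : {ω | ε ≤ ∑ i, X i ω} = {ω | ε ≤ (∑ i, X i) ω} := by
    ext ω; simp [Finset.sum_apply]
  have h_int : Integrable (fun ω => Real.exp (4 * a * (∑ i, X i) ω)) P :=
    hind.integrable_exp_mul_sum hXm (fun i _ => integrable_exp_indicator (hXm i) (hr i) _)
  have h1 := measure_ge_le_exp_mul_mgf (X := ∑ i, X i) (μ := P) ε
    (by positivity : (0:ℝ) ≤ 4 * a) h_int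
  rw [hset]
  refine h1.trans ?_
  have h2 := chernoff_aux X hXm hind hr (4 * a)
  calc Real.exp (-(4 * a) * ε) * mgf (∑ i, X i) P (4 * a)
      ≤ Real.exp (-(4 * a) * ε) * Real.exp (M * (4 * a) + m * ((4 * a) ^ 2 / 8)) := by
        exact mul_le_mul_of_nonneg_left h2 (Real.exp_pos _).le
    _ = Real.exp (-(4 * a) * ε + (M * (4 * a) + m * ((4 * a) ^ 2 / 8))) := by
        rw [← Real.exp_add]
    _ ≤ Real.exp (-2 * m * a ^ 2) := by
        apply Real.exp_le_exp.2
        nlinarith [mul_le_mul_of_nonneg_left hε (by positivity : (0:ℝ) ≤ 4 * a)]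

lemma tail_lower (X : Fin m → Ω → ℝ) (hXm : ∀ i, Measurable (X i))
    (hind : iIndepFun X P)
    (hr : ∀ i ω, X i ω = 0 ∨ X i ω = 1) {a ε : ℝ} (ha : 0 < a)
    (hε : ε ≤ (∑ i, ∫ ω, X i ω ∂P) - m * a) :
    (P {ω | ∑ i, X i ω ≤ ε}).toReal ≤ Real.exp (-2 * m * a ^ 2) := by
  set M : ℝ := ∑ i, ∫ ω, X i ω ∂P with hM
  have hset : {ω | ∑ i, X i ω ≤ ε} = {ω | (∑ i, X i) ω ≤ ε} := by
    ext ω; simp [Finset.sum_apply]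
  have h_int : Integrable (fun ω => Real.exp (-(4 * a) * (∑ i, X i) ω)) P :=
    hind.integrable_exp_mul_sum hXm (fun i _ => integrable_exp_indicator (hXm i) (hr i) _)
  have h1 := measure_le_le_exp_mul_mgf (X := ∑ i, X i) (μ := P) ε
    (by nlinarith : -(4 * a) ≤ 0) h_int
  rw [hset]
  refine h1.trans ?_
  have h2 := chernoff_aux X hXm hind hr (-(4 * a))
  calc Real.exp (-(-(4 * a)) * ε) * mgf (∑ i, X i) P (-(4 * a))
      ≤ Real.exp (-(-(4 * a)) * ε) * Real.exp (M * (-(4 * a)) + m * ((-(4 * a)) ^ 2 / 8)) :=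
        mul_le_mul_of_nonneg_left h2 (Real.exp_pos _).le
    _ = Real.exp (-(-(4 * a)) * ε + (M * (-(4 * a)) + m * ((-(4 * a)) ^ 2 / 8))) := by
        rw [← Real.exp_add]
    _ ≤ Real.exp (-2 * m * a ^ 2) := by
        apply Real.exp_le_exp.2
        nlinarith [mul_le_mul_of_nonneg_left hε (by positivity : (0:ℝ) ≤ 4 * a)]



lemma orderStat_le_iff {m : ℕ} (f : Fin m → ℝ) (x : ℝ) (k : ℕ) (hk1 : 1 ≤ k) (hkm : k ≤ m) :
    (orderStatN f k ≤ x ↔ k ≤ (Finset.univ.filter (fun i => f i ≤ x)).card) := by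
  classical
  have h : k - 1 < m := by omega
  set σ := Tuple.sort f with hσ
  have hmono : Monotone (f ∘ σ) := Tuple.monotone_sort f
  have hcard : (Finset.univ.filter (fun i => f (σ i) ≤ x)).card
      = (Finset.univ.filter (fun i => f i ≤ x)).card := by
    apply Finset.card_equiv σ
    intro i
    simp
  have hv : (⟨k - 1, h⟩ : Fin m).val = k - 1 := rfl
  rw [orderStatN, dif_pos h, ← hcard]
  constructor
  · intro hle
    calc k = (⟨k - 1, h⟩ : Fin m).val + 1 := by rw [hv]; omega
      _ = (Finset.Iic (⟨k - 1, h⟩ : Fin m)).card := (Fin.card_Iic _).symm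
      _ ≤ (Finset.univ.filter (fun i => f (σ i) ≤ x)).card := by
          apply Finset.card_le_card
          intro i hi
          rw [Finset.mem_Iic] at hi
          rw [Finset.mem_filter]
          exact ⟨Finset.mem_univ _, le_trans (hmono hi) hle⟩
  · intro hcard'
    by_contra hx
    push_neg at hx
    have hsub : (Finset.univ.filter (fun i => f (σ i) ≤ x)) ⊆ Finset.Iio (⟨k - 1, h⟩ : Fin m) := by
      intro i hi
      rw [Finset.mem_filter] at hi
      rw [Finset.mem_Iio]
      by_contra hlt
      push_neg at hlt
      exact absurd (le_trans (hmono hlt) hi.2) (not_le.2 hx)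
    have := Finset.card_le_card hsub
    rw [Fin.card_Iio, hv] at this
    omega

end Aux


/-- Calibration quantile accuracy: for `S 1, …, S m` i.i.d. with CDF `F`,
`p = 1 − α`, `q* = inf{q : F(q) ≥ p}`, `k = ⌈(m+1)p⌉ ≤ m`, `q̂ = S_{(k)}`, and the
two-sided growth condition `F(q* + t) ≥ p + c·t`, `F(q* − t) ≤ p − c·t`, we have
`P(|q̂ − q*| > t) ≤ 2·exp(−2m·((c·t − 2/m)₊)²)`. -/
theorem stmt10 {Ω : Type*} [MeasurableSpace Ω] (P : Measure Ω) [IsProbabilityMeasure P]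
    (ν : Measure ℝ) [IsProbabilityMeasure ν]
    {m : ℕ}
    (S : Fin m → Ω → ℝ) (hmeas : ∀ i, Measurable (S i))
    (hindep : ProbabilityTheory.iIndepFun S P)
    (hid : ∀ i, Measure.map (S i) P = ν)
    (F : ℝ → ℝ) (hF : ∀ x, F x = (ν (Set.Iic x)).toReal)
    (α : ℝ) (hα : α ∈ Set.Ioo (0 : ℝ) 1) (p : ℝ) (hp : p = 1 - α)
    (qstar : ℝ) (hqstar : qstar = sInf {q : ℝ | p ≤ F q})
    (k : ℕ) (hk : k = ⌈((m : ℝ) + 1) * p⌉₊) (hkm : k ≤ m)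
    (t c : ℝ) (ht : 0 < t) (hc : 0 < c)
    (hgrow1 : p + c * t ≤ F (qstar + t)) (hgrow2 : F (qstar - t) ≤ p - c * t) :
    P {ω | t < |orderStatN (fun i => S i ω) k - qstar|} ≤
      ENNReal.ofReal (2 * Real.exp (-2 * m * (max (c * t - 2 / m) 0) ^ 2)) := by
  classical
  obtain ⟨hα0, hα1⟩ := hα
  have hp0 : 0 < p := by rw [hp]; linarith
  have hp1 : p < 1 := by rw [hp]; linarith
  have hk1 : 1 ≤ k := by
    rw [hk]
    exact Nat.one_le_iff_ne_zero.2 (Nat.ceil_pos.2 (by positivity)).ne'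
  have hm1 : 1 ≤ m := le_trans hk1 hkm
  have hm0 : (0:ℝ) < m := by exact_mod_cast hm1
  have klb : ((m:ℝ) + 1) * p ≤ k := by rw [hk]; exact Nat.le_ceil _
  have kub : (k:ℝ) < ((m:ℝ) + 1) * p + 1 := by
    rw [hk]; exact Nat.ceil_lt_add_one (by positivity)
  set x₁ : ℝ := qstar + t with hx₁
  set x₂ : ℝ := qstar - t with hx₂
  -- indicator processes
  set g₁ : ℝ → ℝ := fun y => if y ≤ x₁ then 1 else 0 with hg₁def
  set g₂ : ℝ → ℝ := fun y => if y ≤ x₂ then 1 else 0 with hg₂def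
  have hg₁ : Measurable g₁ := Measurable.ite measurableSet_Iic measurable_const measurable_const
  have hg₂ : Measurable g₂ := Measurable.ite measurableSet_Iic measurable_const measurable_const
  set X : Fin m → Ω → ℝ := fun i ω => g₁ (S i ω) with hXdef
  set Y : Fin m → Ω → ℝ := fun i ω => g₂ (S i ω) with hYdef
  have hXm : ∀ i, Measurable (X i) := fun i => hg₁.comp (hmeas i)
  have hYm : ∀ i, Measurable (Y i) := fun i => hg₂.comp (hmeas i)
  have hindX : iIndepFun X P := hindep.comp (fun _ => g₁) (fun _ => hg₁)
  have hindY : iIndepFun Y P := hindep.comp (fun _ => g₂) (fun _ => hg₂)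
  have hrX : ∀ i ω, X i ω = 0 ∨ X i ω = 1 := by
    intro i ω; by_cases h : S i ω ≤ x₁ <;> simp [hXdef, hg₁def, h]
  have hrY : ∀ i ω, Y i ω = 0 ∨ Y i ω = 1 := by
    intro i ω; by_cases h : S i ω ≤ x₂ <;> simp [hYdef, hg₂def, h]
  -- means
  have hmean : ∀ (x : ℝ) (i : Fin m),
      (∫ ω, (if S i ω ≤ x then (1:ℝ) else 0) ∂P) = F x := by
    intro x i
    have h1 : (∫ ω, (if S i ω ≤ x then (1:ℝ) else 0) ∂P)
        = ∫ y, (if y ≤ x then (1:ℝ) else 0) ∂(Measure.map (S i) P) := by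
      rw [integral_map (hmeas i).aemeasurable]
      exact (Measurable.ite measurableSet_Iic measurable_const
        measurable_const).aestronglyMeasurable
    rw [h1, hid i]
    have h2 : (fun y : ℝ => if y ≤ x then (1:ℝ) else 0)
        = (Set.Iic x).indicator (fun _ => (1:ℝ)) := by
      funext y
      by_cases h : y ≤ x <;> simp [Set.indicator_apply, Set.mem_Iic, h]
    rw [h2, hF x]
    simpa [measureReal_def] using integral_indicator_one (measurableSet_Iic : MeasurableSet (Set.Iic x))
  have hMX : (∑ i, ∫ ω, X i ω ∂P) = m * F x₁ := by
    simp only [hXdef, hg₁def]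
    rw [Finset.sum_congr rfl (fun i _ => hmean x₁ i)]
    simp [Finset.sum_const, nsmul_eq_mul]
  have hMY : (∑ i, ∫ ω, Y i ω ∂P) = m * F x₂ := by
    simp only [hYdef, hg₂def]
    rw [Finset.sum_congr rfl (fun i _ => hmean x₂ i)]
    simp [Finset.sum_const, nsmul_eq_mul]
  -- event inclusion
  have hsub : {ω | t < |orderStatN (fun i => S i ω) k - qstar|} ⊆
      {ω | ∑ i, X i ω ≤ (k:ℝ) - 1} ∪ {ω | (k:ℝ) ≤ ∑ i, Y i ω} := by
    intro ω hω
    simp only [Set.mem_setOf_eq] at hω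
    set f : Fin m → ℝ := fun i => S i ω with hfdef
    have hsumX : (∑ i, X i ω) = ((Finset.univ.filter (fun i => f i ≤ x₁)).card : ℝ) := by
      simp only [hXdef, hg₁def, hfdef]
      rw [Finset.sum_boole]
    have hsumY : (∑ i, Y i ω) = ((Finset.univ.filter (fun i => f i ≤ x₂)).card : ℝ) := by
      simp only [hYdef, hg₂def, hfdef]
      rw [Finset.sum_boole]
    rcases lt_abs.1 hω with h | h
    · -- upper deviation : too few samples below x₁
      left
      have hno : ¬ orderStatN f k ≤ x₁ := by
        rw [hx₁]; push_neg; linarith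
      rw [orderStat_le_iff f x₁ k hk1 hkm] at hno
      push_neg at hno
      have : (Finset.univ.filter (fun i => f i ≤ x₁)).card + 1 ≤ k := hno
      have hcast : ((Finset.univ.filter (fun i => f i ≤ x₁)).card : ℝ) + 1 ≤ (k:ℝ) := by
        exact_mod_cast this
      simp only [Set.mem_setOf_eq]
      rw [hsumX]; linarith
    · -- lower deviation : at least k samples below x₂
      right
      have hyes : orderStatN f k ≤ x₂ := by rw [hx₂]; linarith
      rw [orderStat_le_iff f x₂ k hk1 hkm] at hyes
      simp only [Set.mem_setOf_eq]
      rw [hsumY]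
      exact_mod_cast hyes
  rcases le_or_gt (c * t - 2 / m) 0 with hneg | hposa
  · -- trivial case : bound is ≥ 1
    rw [max_eq_right hneg]
    have : (2:ℝ) * Real.exp (-2 * m * (0:ℝ) ^ 2) = 2 := by norm_num
    rw [this]
    refine le_trans prob_le_one ?_
    rw [← ENNReal.ofReal_one]
    exact ENNReal.ofReal_le_ofReal (by norm_num)
  · set a : ℝ := c * t - 2 / m with hadef
    rw [max_eq_left hposa.le]
    have hma : (m:ℝ) * a = m * (c * t) - 2 := by
      rw [hadef]; field_simp
    -- threshold inequalities
    have hεA : (k:ℝ) - 1 ≤ (∑ i, ∫ ω, X i ω ∂P) - m * a := by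
      rw [hMX, hma]
      have h1 : (m:ℝ) * (p + c * t) ≤ m * F x₁ :=
        mul_le_mul_of_nonneg_left hgrow1 hm0.le
      nlinarith
    have hεB : (∑ i, ∫ ω, Y i ω ∂P) + m * a ≤ (k:ℝ) := by
      rw [hMY, hma]
      have h1 : (m:ℝ) * F x₂ ≤ m * (p - c * t) :=
        mul_le_mul_of_nonneg_left hgrow2 hm0.le
      nlinarith
    have hA := tail_lower X hXm hindX hrX hposa hεA
    have hB := tail_upper Y hYm hindY hrY hposa hεB
    have hA' : P {ω | ∑ i, X i ω ≤ (k:ℝ) - 1} ≤ ENNReal.ofReal (Real.exp (-2 * m * a ^ 2)) := by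
      rw [← ENNReal.ofReal_toReal (measure_ne_top P _)]
      exact ENNReal.ofReal_le_ofReal hA
    have hB' : P {ω | (k:ℝ) ≤ ∑ i, Y i ω} ≤ ENNReal.ofReal (Real.exp (-2 * m * a ^ 2)) := by
      rw [← ENNReal.ofReal_toReal (measure_ne_top P _)]
      exact ENNReal.ofReal_le_ofReal hB
    calc P {ω | t < |orderStatN (fun i => S i ω) k - qstar|}
        ≤ P ({ω | ∑ i, X i ω ≤ (k:ℝ) - 1} ∪ {ω | (k:ℝ) ≤ ∑ i, Y i ω}) := measure_mono hsub
      _ ≤ P {ω | ∑ i, X i ω ≤ (k:ℝ) - 1} + P {ω | (k:ℝ) ≤ ∑ i, Y i ω} := measure_union_le _ _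
      _ ≤ ENNReal.ofReal (Real.exp (-2 * m * a ^ 2))
          + ENNReal.ofReal (Real.exp (-2 * m * a ^ 2)) := add_le_add hA' hB'
      _ = ENNReal.ofReal (2 * Real.exp (-2 * m * a ^ 2)) := by
          rw [← ENNReal.ofReal_add (Real.exp_nonneg _) (Real.exp_nonneg _)]
          ring_nf
end

section
/- (Consistency of the coupled CRC/BQ threshold.) Let Λ ⊆ ℝ be an interval, α ∈ (0,1), and R : Λ → ℝ a nonincreasing function, continuous and strictly decreasing on a neighbourhood of λ* = inf{λ ∈ Λ : R(λ) ≤ α}, with λ* interior to Λ. For each m, let R̂_m : Λ → ℝ and b_m : Λ → [0, ∞) be random functions with sup_{λ ∈ Λ} |R̂_m(λ) − R(λ)| → 0 in probability and sup_{λ ∈ Λ} b_m(λ) → 0 in probability, and define λ̂_m = inf{λ ∈ Λ : R̂_m(λ) + b_m(λ) ≤ α}. Then λ̂_m → λ* in probability. -/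
open MeasureTheory Filter

/-- Consistency of the coupled CRC/BQ threshold: let `Λ` be an interval, `R` nonincreasing
on `Λ`, continuous and strictly decreasing near `λ* = inf{λ ∈ Λ : R(λ) ≤ α}`, which is
interior to `Λ`.  If `sup_{λ ∈ Λ} |R̂_m(λ) − R(λ)| → 0` and `sup_{λ ∈ Λ} b_m(λ) → 0` in
probability (with `b_m ≥ 0` on `Λ`), then `λ̂_m = inf{λ ∈ Λ : R̂_m(λ) + b_m(λ) ≤ α}`
converges to `λ*` in probability. -/
theorem stmt14 {Ω : Type*} [MeasurableSpace Ω] (P : Measure Ω) [IsProbabilityMeasure P]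
    (Λ : Set ℝ) (hΛ : Λ.OrdConnected) (α : ℝ) (hα : α ∈ Set.Ioo (0 : ℝ) 1)
    (R : ℝ → ℝ) (hR : AntitoneOn R Λ)
    (lamstar : ℝ) (hdef : lamstar = sInf {l | l ∈ Λ ∧ R l ≤ α})
    (hne : {l | l ∈ Λ ∧ R l ≤ α}.Nonempty)
    (hbdd : BddBelow {l | l ∈ Λ ∧ R l ≤ α})
    (hint : lamstar ∈ interior Λ)
    (hreg : ∃ U ∈ nhds lamstar, ContinuousOn R U ∧ StrictAntiOn R U)
    (Rhat : ℕ → Ω → ℝ → ℝ) (b : ℕ → Ω → ℝ → ℝ)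
    (hbpos : ∀ m ω, ∀ l ∈ Λ, 0 ≤ b m ω l)
    (hRconv : ∀ ε > 0,
      Tendsto (fun m => P {ω | ∃ l ∈ Λ, ε < |Rhat m ω l - R l|}) atTop (nhds 0))
    (hbconv : ∀ ε > 0,
      Tendsto (fun m => P {ω | ∃ l ∈ Λ, ε < b m ω l}) atTop (nhds 0))
    (lamhat : ℕ → Ω → ℝ)
    (hlamhat : ∀ m ω, lamhat m ω = sInf {l | l ∈ Λ ∧ Rhat m ω l + b m ω l ≤ α}) :
    ∀ ε > 0,
      Tendsto (fun m => P {ω | ε < |lamhat m ω - lamstar|}) atTop (nhds 0) := by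

  intro ε hε
  obtain ⟨U, hU, hcont, hanti⟩ := hreg
  have hUI : U ∩ interior Λ ∈ nhds lamstar :=
    Filter.inter_mem hU (isOpen_interior.mem_nhds hint)
  obtain ⟨δ0, hδ0, hball⟩ := Metric.mem_nhds_iff.mp hUI
  set δ : ℝ := min (δ0 / 2) ε with hδdef
  have hδpos : 0 < δ := lt_min (by linarith) hε
  have hδε : δ ≤ ε := min_le_right _ _
  have hmem : ∀ x : ℝ, |x - lamstar| ≤ δ → x ∈ U ∧ x ∈ Λ := by
    intro x hx
    have hxball : x ∈ Metric.ball lamstar δ0 := by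
      rw [Metric.mem_ball, Real.dist_eq]
      have : δ ≤ δ0 / 2 := min_le_left _ _
      linarith
    have := hball hxball
    exact ⟨this.1, interior_subset this.2⟩
  -- key points
  have habs : ∀ t : ℝ, |t| ≤ δ → (lamstar + t ∈ U ∧ lamstar + t ∈ Λ) := by
    intro t ht
    have : |lamstar + t - lamstar| ≤ δ := by simpa using ht
    exact hmem _ this
  have hpU : lamstar + δ ∈ U ∧ lamstar + δ ∈ Λ := habs δ (by rw [abs_of_pos hδpos])
  have hpU2 : lamstar + δ/2 ∈ U ∧ lamstar + δ/2 ∈ Λ := habs (δ/2) (by rw [abs_of_pos (by linarith)]; linarith)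
  have hmU : lamstar - δ ∈ U ∧ lamstar - δ ∈ Λ := by
    have := habs (-δ) (by rw [abs_neg, abs_of_pos hδpos])
    simpa [sub_eq_add_neg] using this
  have hmU2 : lamstar - δ/2 ∈ U ∧ lamstar - δ/2 ∈ Λ := by
    have := habs (-(δ/2)) (by rw [abs_neg, abs_of_pos (by linarith)]; linarith)
    simpa [sub_eq_add_neg] using this
  set S : Set ℝ := {l | l ∈ Λ ∧ R l ≤ α} with hS
  -- R (lamstar + δ/2) ≤ α
  have hmid : R (lamstar + δ/2) ≤ α := by
    obtain ⟨s, hsS, hslt⟩ := exists_lt_of_csInf_lt hne (show sInf S < lamstar + δ/2 by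
      rw [← hdef]; linarith)
    calc R (lamstar + δ/2) ≤ R s := hR hsS.1 hpU2.2 hslt.le
    _ ≤ α := hsS.2
  have hup : R (lamstar + δ) < α :=
    lt_of_lt_of_le (hanti hpU2.1 hpU.1 (by linarith)) hmid
  -- R (lamstar - δ) > α
  have hmid2 : α < R (lamstar - δ/2) := by
    by_contra h
    push_neg at h
    have : lamstar - δ/2 ∈ S := ⟨hmU2.2, h⟩
    have := csInf_le hbdd this
    rw [← hdef] at this
    linarith
  have hlow : α < R (lamstar - δ) :=
    lt_trans hmid2 (hanti hmU.1 hmU2.1 (by linarith))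
  set η : ℝ := min (α - R (lamstar + δ)) (R (lamstar - δ) - α) / 2 with hηdef
  have hηpos : 0 < η := by
    apply div_pos _ (by norm_num)
    exact lt_min (by linarith) (by linarith)
  have hη1 : 2 * η ≤ α - R (lamstar + δ) := by
    have := min_le_left (α - R (lamstar + δ)) (R (lamstar - δ) - α)
    rw [hηdef]; linarith
  have hη2 : η < R (lamstar - δ) - α := by
    have h1 := min_le_right (α - R (lamstar + δ)) (R (lamstar - δ) - α)
    have h2 : 0 < R (lamstar - δ) - α := by linarith
    rw [hηdef]; linarith
  -- set inclusion
  have hsub : ∀ m, {ω | ε < |lamhat m ω - lamstar|} ⊆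
      {ω | ∃ l ∈ Λ, η < |Rhat m ω l - R l|} ∪ {ω | ∃ l ∈ Λ, η < b m ω l} := by
    intro m ω hω
    by_contra hcon
    simp only [Set.mem_union, Set.mem_setOf_eq, not_or, not_exists] at hcon
    push_neg at hcon
    obtain ⟨h1, h2⟩ := hcon
    set T : Set ℝ := {l | l ∈ Λ ∧ Rhat m ω l + b m ω l ≤ α} with hT
    have hTmem : lamstar + δ ∈ T := by
      refine ⟨hpU.2, ?_⟩
      have ha := (abs_le.mp (h1 _ hpU.2)).2
      have hb := h2 _ hpU.2
      linarith
    have hTlb : ∀ l ∈ T, lamstar - δ ≤ l := by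
      intro l hl
      by_contra hc
      push_neg at hc
      have hRl : R (lamstar - δ) ≤ R l := hR hl.1 hmU.2 hc.le
      have ha := (abs_le.mp (h1 _ hl.1)).1
      have hb := hbpos m ω l hl.1
      have := hl.2
      linarith
    have hub : lamhat m ω ≤ lamstar + δ := by
      rw [hlamhat m ω]
      exact csInf_le ⟨lamstar - δ, hTlb⟩ hTmem
    have hlb : lamstar - δ ≤ lamhat m ω := by
      rw [hlamhat m ω]
      exact le_csInf ⟨_, hTmem⟩ hTlb
    have : |lamhat m ω - lamstar| ≤ δ := abs_le.mpr ⟨by linarith, by linarith⟩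
    simp only [Set.mem_setOf_eq] at hω
    linarith
  have hadd : Tendsto (fun m => P {ω | ∃ l ∈ Λ, η < |Rhat m ω l - R l|}
      + P {ω | ∃ l ∈ Λ, η < b m ω l}) atTop (nhds 0) := by
    have := (hRconv η hηpos).add (hbconv η hηpos)
    simpa using this
  refine tendsto_of_tendsto_of_tendsto_of_le_of_le tendsto_const_nhds hadd
    (fun m => zero_le) (fun m => ?_)
  exact le_trans (measure_mono (hsub m)) (measure_union_le _ _)
end

section
/- (Asymptotic agreement of DCO and CRC/BQ thresholds.) Let Λ ⊆ ℝ be an interval, α ∈ (0,1), and R : Λ → ℝ a nonincreasing function, continuous and strictly decreasing on a neighbourhood of λ* = inf{λ ∈ Λ : R(λ) ≤ α}, with λ* interior to Λ. For each m, let λ̂_DCO,m be random variables with λ̂_DCO,m → λ* in probability, and let R̂_m : Λ → ℝ and b_m : Λ → [0, ∞) be random functions with sup_{λ ∈ Λ} |R̂_m(λ) − R(λ)| → 0 in probability and sup_{λ ∈ Λ} b_m(λ) → 0 in probability; define λ̂_CRC,m = inf{λ ∈ Λ : R̂_m(λ) + b_m(λ) ≤ α}. Then λ̂_CRC,m − λ̂_DCO,m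 → 0 in probability. -/
open MeasureTheory Filter

/-- Asymptotic agreement of DCO and CRC/BQ thresholds: under the regularity conditions on
the population risk `R` near `λ* = inf{λ ∈ Λ : R(λ) ≤ α}`, if the DCO thresholds satisfy
`λ̂_DCO,m → λ*` in probability, and the coupled thresholds
`λ̂_CRC,m = inf{λ ∈ Λ : R̂_m(λ) + b_m(λ) ≤ α}` are built from uniformly consistent risk
estimates `R̂_m` and uniformly vanishing nonnegative margins `b_m`, then
`λ̂_CRC,m − λ̂_DCO,m → 0` in probability. -/
theorem stmt15 {Ω : Type*} [MeasurableSpace Ω] (P : Measure Ω) [IsProbabilityMeasure P]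
    (Λ : Set ℝ) (hΛ : Λ.OrdConnected) (α : ℝ) (hα : α ∈ Set.Ioo (0 : ℝ) 1)
    (R : ℝ → ℝ) (hR : AntitoneOn R Λ)
    (lamstar : ℝ) (hdef : lamstar = sInf {l | l ∈ Λ ∧ R l ≤ α})
    (hne : {l | l ∈ Λ ∧ R l ≤ α}.Nonempty)
    (hbdd : BddBelow {l | l ∈ Λ ∧ R l ≤ α})
    (hint : lamstar ∈ interior Λ)
    (hreg : ∃ U ∈ nhds lamstar, ContinuousOn R U ∧ StrictAntiOn R U)
    (lamDCO : ℕ → Ω → ℝ)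
    (hDCO : ∀ ε > 0,
      Tendsto (fun m => P {ω | ε < |lamDCO m ω - lamstar|}) atTop (nhds 0))
    (Rhat : ℕ → Ω → ℝ → ℝ) (b : ℕ → Ω → ℝ → ℝ)
    (hbpos : ∀ m ω, ∀ l ∈ Λ, 0 ≤ b m ω l)
    (hRconv : ∀ ε > 0,
      Tendsto (fun m => P {ω | ∃ l ∈ Λ, ε < |Rhat m ω l - R l|}) atTop (nhds 0))
    (hbconv : ∀ ε > 0,
      Tendsto (fun m => P {ω | ∃ l ∈ Λ, ε < b m ω l}) atTop (nhds 0))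
    (lamCRC : ℕ → Ω → ℝ)
    (hlamCRC : ∀ m ω, lamCRC m ω = sInf {l | l ∈ Λ ∧ Rhat m ω l + b m ω l ≤ α}) :
    ∀ ε > 0,
      Tendsto (fun m => P {ω | ε < |lamCRC m ω - lamDCO m ω|}) atTop (nhds 0) := by

  obtain ⟨U, hU, hCont, hSAnti⟩ := hreg
  -- basic neighbourhood facts
  obtain ⟨ε₀, hε₀pos, hsub⟩ :=
    Metric.mem_nhds_iff.mp (Filter.inter_mem hU (isOpen_interior.mem_nhds hint))
  have hmem : ∀ t : ℝ, |t| < ε₀ → lamstar + t ∈ U ∧ lamstar + t ∈ Λ := by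
    intro t ht
    have : lamstar + t ∈ Metric.ball lamstar ε₀ := by
      simp [Real.dist_eq, abs_of_nonneg, ht]
    have h2 := hsub this
    exact ⟨h2.1, interior_subset h2.2⟩
  have hlamΛ : lamstar ∈ Λ := interior_subset hint
  have hlamU : lamstar ∈ U := by
    have := (hmem 0 (by simpa using hε₀pos))
    simpa using this.1
  -- Claim A : to the right of lamstar, risk ≤ α
  have hA : ∀ l ∈ Λ, lamstar < l → R l ≤ α := by
    intro l hl hlt
    have : sInf {l | l ∈ Λ ∧ R l ≤ α} < l := by rw [← hdef]; exact hlt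
    obtain ⟨s, hs, hsl⟩ := (csInf_lt_iff hbdd hne).mp this
    exact le_trans (hR hs.1 hl hsl.le) hs.2
  -- Claim C : strictly left of lamstar, risk > α
  have hC : ∀ l ∈ Λ, l < lamstar → α < R l := by
    intro l hl hlt
    by_contra h
    push_neg at h
    have : lamstar ≤ l := by
      rw [hdef]; exact csInf_le hbdd ⟨hl, h⟩
    linarith
  -- Claim B : R lamstar ≤ α, via continuity from the right
  have hRs : R lamstar ≤ α := by
    by_contra h
    push_neg at h
    have hca : ContinuousAt R lamstar := hCont.continuousAt hU
    obtain ⟨δ', hδ'pos, hδ'⟩ := Metric.continuousAt_iff.mp hca (R lamstar - α) (by linarith)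
    set t : ℝ := min δ' ε₀ / 2 with ht_def
    have htpos : 0 < t := by positivity
    have htε₀ : t < ε₀ := by
      have : min δ' ε₀ ≤ ε₀ := min_le_right _ _
      linarith
    have htδ' : t < δ' := by
      have : min δ' ε₀ ≤ δ' := min_le_left _ _
      linarith
    have hmem' := hmem t (by rw [abs_of_pos htpos]; exact htε₀)
    have hRle := hA (lamstar + t) hmem'.2 (by linarith)
    have hdist : dist (lamstar + t) lamstar < δ' := by
      simp [Real.dist_eq, abs_of_pos htpos, htδ']
    have := hδ' hdist
    rw [Real.dist_eq] at this
    have := abs_lt.mp this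
    linarith [this.1]
  -- main argument
  intro ε hε
  set e : ℝ := min (ε₀ / 2) (ε / 2) with he_def
  have hepos : 0 < e := by positivity
  have heε₀ : e < ε₀ := by
    have : e ≤ ε₀ / 2 := min_le_left _ _
    linarith
  have heε : e ≤ ε / 2 := min_le_right _ _
  have hplus := hmem e (by rw [abs_of_pos hepos]; exact heε₀)
  have hminus := hmem (-e) (by rw [abs_neg, abs_of_pos hepos]; exact heε₀)
  have h1 : R (lamstar + e) < α :=
    lt_of_lt_of_le (hSAnti hlamU hplus.1 (by linarith)) hRs
  have h2 : α < R (lamstar - e) := by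
    have := hC (lamstar - e) (by simpa [sub_eq_add_neg] using hminus.2) (by linarith)
    exact this
  set δ : ℝ := min (α - R (lamstar + e)) (R (lamstar - e) - α) / 2 with hδ_def
  have hδpos : 0 < δ := by
    have := lt_min (by linarith : (0:ℝ) < α - R (lamstar + e))
      (by linarith : (0:ℝ) < R (lamstar - e) - α)
    positivity
  have hδA : 2 * δ ≤ α - R (lamstar + e) := by
    have : min (α - R (lamstar + e)) (R (lamstar - e) - α) ≤ α - R (lamstar + e) :=
      min_le_left _ _
    linarith
  have hδB : 2 * δ ≤ R (lamstar - e) - α := by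
    have : min (α - R (lamstar + e)) (R (lamstar - e) - α) ≤ R (lamstar - e) - α :=
      min_le_right _ _
    linarith
  -- event inclusion
  have hincl : ∀ m : ℕ, {ω | ε < |lamCRC m ω - lamDCO m ω|} ⊆
      {ω | ε / 2 < |lamDCO m ω - lamstar|} ∪
      ({ω | ∃ l ∈ Λ, δ < |Rhat m ω l - R l|} ∪ {ω | ∃ l ∈ Λ, δ < b m ω l}) := by
    intro m ω hω
    by_contra hcon
    simp only [Set.mem_union, Set.mem_setOf_eq] at hcon hω
    push_neg at hcon
    obtain ⟨hDle, hRle, hble⟩ := hcon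
    -- deterministic argument
    set T : Set ℝ := {l | l ∈ Λ ∧ Rhat m ω l + b m ω l ≤ α} with hT_def
    have hmemT : lamstar + e ∈ T := by
      refine ⟨hplus.2, ?_⟩
      have hr := abs_le.mp (hRle _ hplus.2)
      have hb := hble _ hplus.2
      linarith [hr.1, hr.2]
    have hlb : ∀ l ∈ T, lamstar - e ≤ l := by
      intro l hl
      by_contra hlt
      push_neg at hlt
      have hmono : R (lamstar - e) ≤ R l := by
        have hminusΛ : lamstar - e ∈ Λ := by simpa [sub_eq_add_neg] using hminus.2
        exact hR hl.1 hminusΛ hlt.le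
      have hr := abs_le.mp (hRle _ hl.1)
      have hb := hbpos m ω _ hl.1
      have := hl.2
      linarith [hr.1]
    have hTbdd : BddBelow T := ⟨lamstar - e, hlb⟩
    have hup : sInf T ≤ lamstar + e := csInf_le hTbdd hmemT
    have hlow : lamstar - e ≤ sInf T := le_csInf ⟨_, hmemT⟩ hlb
    have hCRCeq : lamCRC m ω = sInf T := hlamCRC m ω
    have hD := abs_le.mp hDle
    have : |lamCRC m ω - lamDCO m ω| ≤ ε := by
      rw [hCRCeq, abs_le]
      constructor <;> linarith [hD.1, hD.2]
    linarith
  -- squeeze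
  have hsum : Tendsto (fun m => P {ω | ε / 2 < |lamDCO m ω - lamstar|} +
      (P {ω | ∃ l ∈ Λ, δ < |Rhat m ω l - R l|} + P {ω | ∃ l ∈ Λ, δ < b m ω l}))
      atTop (nhds 0) := by
    have := (hDCO (ε / 2) (by linarith)).add ((hRconv δ hδpos).add (hbconv δ hδpos))
    simpa using this
  refine tendsto_of_tendsto_of_tendsto_of_le_of_le tendsto_const_nhds hsum
    (fun m => zero_le) (fun m => ?_)
  calc P {ω | ε < |lamCRC m ω - lamDCO m ω|}
      ≤ P ({ω | ε / 2 < |lamDCO m ω - lamstar|} ∪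
        ({ω | ∃ l ∈ Λ, δ < |Rhat m ω l - R l|} ∪ {ω | ∃ l ∈ Λ, δ < b m ω l})) :=
        measure_mono (hincl m)
    _ ≤ _ := le_trans (measure_union_le _ _)
        (add_le_add le_rfl (measure_union_le _ _))
end

section
/- (Uniform empirical-CDF event implies quantile deviation bound.) Let S_1, …, S_m be real numbers with empirical distribution function F̂_m(q) = (1/m)·#{i : S_i ≤ q}, and let F be a function with values in [0,1]. Let p ∈ [0,1], k = ⌈(m+1)p⌉ with k ≤ m, and q̂ = S_{(k)}. Fix q* ∈ ℝ, t > 0, c > 0 with F(q* + t) ≥ p + c·t and F(q* − t) ≤ p − c·t, and suppose sup_q |F̂_m(q) − F(q)| ≤ c·t − 2/m (in particular c·t > 2/m). Then |q̂ − q*| ≤ t. -/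
/-- Uniform empirical-CDF event implies quantile deviation bound: with `k = ⌈(m+1)p⌉ ≤ m`,
`qhat = S_{(k)}`, the two-sided growth condition `F(q* + t) ≥ p + c·t`,
`F(q* − t) ≤ p − c·t`, and `sup_q |F̂_m(q) − F(q)| ≤ c·t − 2/m`, we have `|qhat − q*| ≤ t`. -/
theorem stmt17 {m : ℕ} (S : Fin m → ℝ)
    (F : ℝ → ℝ) (hF : ∀ q, F q ∈ Set.Icc (0 : ℝ) 1)
    (p : ℝ) (hp : p ∈ Set.Icc (0 : ℝ) 1)
    (k : ℕ) (hk : k = ⌈((m : ℝ) + 1) * p⌉₊) (hk1 : 1 ≤ k) (hkm : k ≤ m)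
    (qstar t c : ℝ) (ht : 0 < t) (hc : 0 < c)
    (hgrow1 : p + c * t ≤ F (qstar + t)) (hgrow2 : F (qstar - t) ≤ p - c * t)
    (hsup : ∀ q : ℝ, |empCDF S q - F q| ≤ c * t - 2 / m) :
    |orderStatN S k - qstar| ≤ t := by
  have hm : 0 < m := lt_of_lt_of_le hk1 hkm
  have hmR : (0:ℝ) < m := Nat.cast_pos.mpr hm
  have hinv : (m:ℝ) * (m:ℝ)⁻¹ = 1 := mul_inv_cancel₀ hmR.ne'
  have hinvpos : (0:ℝ) < (m:ℝ)⁻¹ := inv_pos.mpr hmR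
  have hkm' : k - 1 < m := by omega
  set σ := Tuple.sort S with hσ
  set j0 : Fin m := ⟨k - 1, hkm'⟩ with hj0
  have hqhat : orderStatN S k = S (σ j0) := by
    unfold orderStatN; rw [dif_pos hkm']
  set qhat := S (σ j0) with hqhatdef
  have hmono : Monotone (S ∘ σ) := Tuple.monotone_sort S
  -- at least k points are ≤ qhat
  have hA : (k : ℝ) ≤ ((Finset.univ.filter fun i => S i ≤ qhat).card : ℝ) := by
    have hsub : (Finset.Iic j0).image σ ⊆ Finset.univ.filter fun i => S i ≤ qhat := by
      intro i hi
      simp only [Finset.mem_image, Finset.mem_Iic] at hi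
      obtain ⟨j, hj, rfl⟩ := hi
      simp only [Finset.mem_filter, Finset.mem_univ, true_and]
      exact hmono hj
    have hcard : ((Finset.Iic j0).image σ).card = k := by
      rw [Finset.card_image_of_injective _ σ.injective, Fin.card_Iic]
      simp [hj0]; omega
    have := Finset.card_le_card hsub
    rw [hcard] at this
    exact_mod_cast this
  -- for q < qhat, at most k-1 points are ≤ q
  have hB : ∀ q : ℝ, q < qhat →
      ((Finset.univ.filter fun i => S i ≤ q).card : ℝ) ≤ (k : ℝ) - 1 := by
    intro q hq
    have hsub : (Finset.univ.filter fun i => S i ≤ q) ⊆ ((Finset.Ici j0).image σ)ᶜ := by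
      intro i hi
      simp only [Finset.mem_filter, Finset.mem_univ, true_and] at hi
      simp only [Finset.mem_compl, Finset.mem_image, Finset.mem_Ici, not_exists, not_and]
      intro j hj hji
      have : qhat ≤ S (σ j) := hmono hj
      rw [hji] at this
      linarith
    have hcard : (((Finset.Ici j0).image σ)ᶜ).card = k - 1 := by
      rw [Finset.card_compl, Finset.card_image_of_injective _ σ.injective, Fin.card_Ici]
      simp [hj0]; omega
    have := Finset.card_le_card hsub
    rw [hcard] at this
    have : ((Finset.univ.filter fun i => S i ≤ q).card : ℝ) ≤ ((k - 1 : ℕ) : ℝ) :=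
      Nat.cast_le.mpr this
    have hcast : ((k - 1 : ℕ) : ℝ) = (k : ℝ) - 1 := by
      rw [Nat.cast_sub hk1]; norm_num
    linarith [hcast ▸ this]
  -- bounds on k
  have hkub : (k : ℝ) < ((m:ℝ) + 1) * p + 1 := by
    rw [hk]
    exact Nat.ceil_lt_add_one (by nlinarith [hp.1])
  have hklb : ((m:ℝ) + 1) * p ≤ (k : ℝ) := by
    rw [hk]; exact Nat.le_ceil _
  -- upper bound on qhat
  have hub : qhat ≤ qstar + t := by
    by_contra h
    push_neg at h
    have h1 := hB (qstar + t) h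
    have h2 := (abs_le.mp (hsup (qstar + t))).1
    have hemp : empCDF S (qstar + t) = (m:ℝ)⁻¹ * ((Finset.univ.filter fun i => S i ≤ qstar + t).card : ℝ) := rfl
    have hle : empCDF S (qstar + t) ≤ (m:ℝ)⁻¹ * ((k:ℝ) - 1) := by
      rw [hemp]; exact mul_le_mul_of_nonneg_left h1 hinvpos.le
    have hge : p + 2 / m ≤ empCDF S (qstar + t) := by
      have := hF (qstar + t)
      have h2m : 2 / (m:ℝ) = 2 * (m:ℝ)⁻¹ := by ring
      linarith
    have hfin : (m:ℝ) * (p + 2/m) ≤ (m:ℝ) * ((m:ℝ)⁻¹ * ((k:ℝ)-1)) :=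
      mul_le_mul_of_nonneg_left (le_trans hge hle) hmR.le
    have h2m : (m:ℝ) * (2 / m) = 2 := by field_simp
    nlinarith [hp.2]
  -- lower bound on qhat
  have hlb : qstar - t ≤ qhat := by
    by_contra h
    push_neg at h
    have hsub : (Finset.univ.filter fun i => S i ≤ qhat) ⊆
        (Finset.univ.filter fun i => S i ≤ qstar - t) := by
      intro i hi
      simp only [Finset.mem_filter, Finset.mem_univ, true_and] at hi ⊢
      linarith
    have h1 : (k : ℝ) ≤ ((Finset.univ.filter fun i => S i ≤ qstar - t).card : ℝ) :=
      le_trans hA (Nat.cast_le.mpr (Finset.card_le_card hsub))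
    have h2 := (abs_le.mp (hsup (qstar - t))).2
    have hemp : empCDF S (qstar - t) = (m:ℝ)⁻¹ * ((Finset.univ.filter fun i => S i ≤ qstar - t).card : ℝ) := rfl
    have hge : (m:ℝ)⁻¹ * (k:ℝ) ≤ empCDF S (qstar - t) := by
      rw [hemp]; exact mul_le_mul_of_nonneg_left h1 hinvpos.le
    have hle : empCDF S (qstar - t) ≤ p - 2 / m := by linarith
    have hfin : (m:ℝ) * ((m:ℝ)⁻¹ * (k:ℝ)) ≤ (m:ℝ) * (p - 2/m) :=
      mul_le_mul_of_nonneg_left (le_trans hge hle) hmR.le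
    have h2m : (m:ℝ) * (2 / m) = 2 := by field_simp
    nlinarith [hp.1]
  rw [hqhat]
  exact abs_le.mpr ⟨by linarith, by linarith⟩
end
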